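/- arXiv:1809.05873 — 8 statements merged into one kernel-verified Lean document; each statement's English description precedes it below -/
import Mathlib

section
/- A directed partially ordered vector space X is a pre-Riesz space if and only if there exist a vector lattice Y and a bipositive linear map i : X → Y such that i(X) is order dense in Y. -/
open Set Filter

section Prelude

variable {E F : Type*}

/-- A linear map is bipositive if `0 ≤ x ↔ 0 ≤ i x`. -/
def IsBipositive [AddCommGroup E] [PartialOrder E] [AddCommGroup F] [PartialOrder F]
    [Module ℝ E] [Module ℝ F] (i : E →ₗ[ℝ] F) : Prop :=
  ∀ x : E, 0 ≤ x ↔ 0 ≤ i x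

/-- The range of `i` is order dense in `F`. -/
def OrderDenseRange [AddCommGroup E] [PartialOrder E] [AddCommGroup F] [PartialOrder F]
    [Module ℝ E] [Module ℝ F] (i : E →ₗ[ℝ] F) : Prop :=
  ∀ y : F, IsGLB {z : F | z ∈ Set.range i ∧ y ≤ z} y

/-- The range of `i` is majorizing in `F`. -/
def MajorizingRange [AddCommGroup E] [PartialOrder E] [AddCommGroup F] [PartialOrder F]
    [Module ℝ E] [Module ℝ F] (i : E →ₗ[ℝ] F) : Prop :=
  ∀ y : F, ∃ x : E, y ≤ i x

/-- Pre-Riesz space property. -/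
def IsPreRiesz (E : Type*) [AddCommGroup E] [PartialOrder E] [Module ℝ E] : Prop :=
  ∀ x y z : E, upperBounds {x + y, x + z} ⊆ upperBounds {y, z} → 0 ≤ x

/-- Archimedean property of a partially ordered group. -/
def ArchimedeanOrderPO (E : Type*) [AddCommGroup E] [PartialOrder E] : Prop :=
  ∀ x y : E, (∀ n : ℕ, n • x ≤ y) → x ≤ 0

/-- Pervasiveness of the embedding `i` of a pre-Riesz space into a vector lattice cover. -/
def Pervasive [AddCommGroup E] [PartialOrder E] [AddCommGroup F] [PartialOrder F]
    [Module ℝ E] [Module ℝ F] (i : E →ₗ[ℝ] F) : Prop :=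
  ∀ y : F, 0 < y → ∃ x : E, 0 < i x ∧ i x ≤ y

/-- Dedekind completeness of a partially ordered set. -/
def DedekindComplete (F : Type*) [Preorder F] : Prop :=
  ∀ S : Set F, S.Nonempty → BddAbove S → ∃ a, IsLUB S a

/-- Regular seminorm. -/
def IsRegularSeminorm [AddCommGroup E] [PartialOrder E] [Module ℝ E]
    (p : Seminorm ℝ E) : Prop :=
  ∀ x : E, p x = sInf (p '' {y : E | -y ≤ x ∧ x ≤ y})

/-- Monotone seminorm. -/
def IsMonotoneSeminorm [AddCommGroup E] [PartialOrder E] [Module ℝ E]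
    (p : Seminorm ℝ E) : Prop :=
  ∀ x y : E, 0 ≤ x → x ≤ y → p x ≤ p y

/-- Semimonotone seminorm. -/
def IsSemimonotoneSeminorm [AddCommGroup E] [PartialOrder E] [Module ℝ E]
    (p : Seminorm ℝ E) : Prop :=
  ∃ C : ℝ, 0 < C ∧ ∀ x y : E, 0 ≤ x → x ≤ y → p x ≤ C * p y

/-- The regular extension of the seminorm `p` along the embedding `i`. -/
noncomputable def regExt [AddCommGroup E] [PartialOrder E] [AddCommGroup F] [PartialOrder F]
    [Module ℝ E] [Module ℝ F] (p : Seminorm ℝ E) (i : E →ₗ[ℝ] F) (y : F) : ℝ :=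
  sInf (p '' {x : E | -(i x) ≤ y ∧ y ≤ i x})

/-- Order convergence of a net: there is a set `D` downward directed with infimum `0`
such that eventually `±(x α - l) ≤ d` for every `d ∈ D`. -/
def OrderConvergesTo [AddCommGroup F] [PartialOrder F] {ι : Type*} [Preorder ι]
    (x : ι → F) (l : F) : Prop :=
  ∃ D : Set F, D.Nonempty ∧ DirectedOn (· ≥ ·) D ∧ IsGLB D 0 ∧
    ∀ d ∈ D, ∃ α₀ : ι, ∀ α, α₀ ≤ α → -d ≤ x α - l ∧ x α - l ≤ d

/-- Order continuity of a seminorm-like function: order convergent nets are sent to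
norm-null nets. -/
def OrderContinuousSemFun [AddCommGroup F] [PartialOrder F] (p : F → ℝ) : Prop :=
  ∀ (ι : Type) [Preorder ι] [IsDirected ι (· ≤ ·)] [Nonempty ι],
    ∀ (x : ι → F) (l : F), OrderConvergesTo x l →
      Tendsto (fun α => p (x α - l)) atTop (nhds 0)

/-- Compactness of a map with respect to seminorm-like functions `p` (domain) and
`q` (codomain): bounded sequences are mapped to sequences with a `q`-convergent
subsequence. -/
def SCompact [AddCommGroup E] [AddCommGroup F] (p : E → ℝ) (q : F → ℝ) (T : E → F) : Prop :=
  ∀ x : ℕ → E, (∃ M : ℝ, ∀ n, p (x n) ≤ M) →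
    ∃ (φ : ℕ → ℕ) (l : F), StrictMono φ ∧
      Tendsto (fun n => q (T (x (φ n)) - l)) atTop (nhds 0)

/-- Order unit. -/
def IsOrderUnit [AddCommGroup E] [PartialOrder E] [Module ℝ E] (e : E) : Prop :=
  ∀ x : E, ∃ l : ℝ, 0 < l ∧ x ≤ l • e

/-- The order unit (semi)norm associated to `e`. -/
noncomputable def unitNorm [AddCommGroup E] [PartialOrder E] [Module ℝ E] (e x : E) : ℝ :=
  sInf {l : ℝ | 0 < l ∧ -(l • e) ≤ x ∧ x ≤ l • e}

/-- A linear functional bounded with respect to a seminorm-like function `p`. -/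
def BddLin [AddCommGroup E] [Module ℝ E] (p : E → ℝ) (f : E →ₗ[ℝ] ℝ) : Prop :=
  ∃ C : ℝ, ∀ x, |f x| ≤ C * p x

end Prelude

namespace VH

open Pointwise

set_option linter.unusedSectionVars false

variable {X : Type} [AddCommGroup X] [PartialOrder X]
    [CovariantClass X X (· + ·) (· ≤ ·)] [Module ℝ X] [PosSMulMono ℝ X]

lemma shift {a b c d : X} (h : a ≤ b) (e : d - c = b - a) : c ≤ d :=
  sub_nonneg.mp (by rw [e]; exact sub_nonneg.mpr h)

lemma mem_ub_add {S T : Set X} {v : X} :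
    v ∈ upperBounds (S + T) ↔ ∀ s ∈ S, ∀ t ∈ T, s + t ≤ v := by
  constructor
  · intro h s hs t ht; exact h (Set.add_mem_add hs ht)
  · rintro h x ⟨s, hs, t, ht, rfl⟩; exact h s hs t ht

lemma ub_up {S : Set X} {u v : X} (hu : u ∈ upperBounds S) (huv : u ≤ v) :
    v ∈ upperBounds S := fun _ ha => (hu ha).trans huv

lemma ub_add_mono {S T : Set X} (h : upperBounds S ⊆ upperBounds T) (R : Set X) :
    upperBounds (S + R) ⊆ upperBounds (T + R) := by
  intro v hv
  rw [mem_ub_add] at hv ⊢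
  intro t ht r hr
  have h1 : v - r ∈ upperBounds S := by
    intro s hs
    exact le_sub_iff_add_le.mpr (hv s hs r hr)
  exact le_sub_iff_add_le.mp (h h1 ht)

lemma ub_add_congr {S T : Set X} (h : upperBounds S = upperBounds T) (R : Set X) :
    upperBounds (S + R) = upperBounds (T + R) :=
  Set.Subset.antisymm (ub_add_mono h.le R) (ub_add_mono h.ge R)

lemma nary_aux (hp : IsPreRiesz X) :
    ∀ n : ℕ, ∀ S : Set X, S.Finite → S.Nonempty → S.ncard ≤ n →
      ∀ x : X, upperBounds ({x} + S) ⊆ upperBounds S → 0 ≤ x := by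
  intro n
  induction n with
  | zero =>
    intro S hf hne hc x h
    have := (Set.ncard_pos hf).mpr hne
    exfalso; omega
  | succ n ih =>
    intro S hf hne hc x h
    by_cases hsub : ∃ a ∈ S, ∃ b ∈ S, a ≠ b
    · obtain ⟨a, ha, b₀, hb₀, hab⟩ := hsub
      set d := a - b₀ with hd
      -- Claim A
      have claimA : ∀ p : X, x ≤ p → x + d ≤ p → 0 ≤ p := by
        intro p hxp hxdp
        have hmem : b₀ ∈ S \ {a} := ⟨hb₀, by simpa using (Ne.symm hab)⟩
        refine ih (S \ {a}) hf.diff ⟨b₀, hmem⟩ ?_ p ?_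
        · have := Set.ncard_diff_singleton_lt_of_mem ha hf
          omega
        · intro v hv
          rw [mem_ub_add] at hv
          have hvS : v ∈ upperBounds ({x} + S) := by
            rw [mem_ub_add]
            intro s hs t ht
            rw [Set.mem_singleton_iff] at hs
            rw [hs]
            by_cases hta : t = a
            · rw [hta]
              have h1 : p + b₀ ≤ v := hv p rfl b₀ hmem
              refine shift (add_le_add_right hxdp b₀) ?_ |>.trans h1
              rw [hd]; abel
            · have h1 : p + t ≤ v := hv p rfl t ⟨ht, hta⟩
              exact le_trans (add_le_add_left hxp t) h1
          exact fun {y} hy => (h hvS) hy.1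
      -- Claim B
      have claimB : ∀ p : X, x ≤ p → x + d ≤ p → d ≤ p := by
        intro p hxp hxdp
        have hmem : a ∈ S \ {b₀} := ⟨ha, by simpa using hab⟩
        have h0 : 0 ≤ p - d := by
          refine ih (S \ {b₀}) hf.diff ⟨a, hmem⟩ ?_ (p - d) ?_
          · have := Set.ncard_diff_singleton_lt_of_mem hb₀ hf
            omega
          · intro v hv
            rw [mem_ub_add] at hv
            have hvS : v ∈ upperBounds ({x} + S) := by
              rw [mem_ub_add]
              intro s hs t ht
              rw [Set.mem_singleton_iff] at hs
              rw [hs]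
              by_cases htb : t = b₀
              · rw [htb]
                have h1 : (p - d) + a ≤ v := hv _ rfl a hmem
                have h2 : p - d + a = p + b₀ := by rw [hd]; abel
                exact ((add_le_add_left hxp b₀).trans h2.symm.le).trans h1
              · have h1 : (p - d) + t ≤ v := hv _ rfl t ⟨ht, htb⟩
                refine (shift (add_le_add_right hxdp t) ?_).trans h1
                abel
            exact fun {y} hy => (h hvS) hy.1
        exact sub_nonneg.mp h0
      -- conclude with binary pre-Riesz
      refine hp x 0 d ?_
      intro v hv
      rw [mem_upperBounds] at hv
      have hvx : x ≤ v := by simpa using hv (x + 0) (Set.mem_insert _ _)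
      have hvxd : x + d ≤ v := hv (x + d) (Set.mem_insert_iff.mpr (Or.inr rfl))
      rw [mem_upperBounds]
      rintro y hy
      rcases Set.mem_insert_iff.mp hy with rfl | hy
      · exact claimA v hvx hvxd
      · rw [Set.mem_singleton_iff] at hy
        rw [hy]
        exact claimB v hvx hvxd
    · push_neg at hsub
      obtain ⟨a, ha⟩ := hne
      have hv : x + a ∈ upperBounds ({x} + S) := by
        rw [mem_ub_add]
        intro s hs t ht
        rw [Set.mem_singleton_iff] at hs
        rw [hs, hsub a ha t ht]
      have := h hv ha
      exact (le_add_iff_nonneg_left a).mp this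

lemma nary (hp : IsPreRiesz X) {S : Set X} (hf : S.Finite) (hne : S.Nonempty) {x : X}
    (h : upperBounds ({x} + S) ⊆ upperBounds S) : 0 ≤ x :=
  nary_aux hp S.ncard S hf hne le_rfl x h

lemma cancel (hp : IsPreRiesz X) {A B C : Set X} (hCf : C.Finite) (hCne : C.Nonempty)
    (h : upperBounds (A + C) ⊆ upperBounds (B + C)) :
    upperBounds A ⊆ upperBounds B := by
  intro u hu b hb
  have h0 : 0 ≤ u - b := by
    refine nary hp hCf hCne ?_
    intro v hv
    rw [mem_ub_add] at hv
    have h2 : v + b ∈ upperBounds (A + C) := by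
      rw [mem_ub_add]
      intro a ha c hc
      have h3 : u - b + c ≤ v := hv _ rfl c hc
      refine shift (add_le_add (hu ha) h3) ?_
      abel
    have h5 := h h2
    rw [mem_ub_add] at h5
    intro c hc
    have h6 := h5 b hb c hc
    refine shift h6 ?_
    abel
  refine shift h0 ?_; abel

lemma L4 (hp : IsPreRiesz X) {D : Set X} (hDf : D.Finite) (hDne : D.Nonempty) {ψ : X}
    (h : ∀ e ∈ upperBounds D, ψ + e ∈ upperBounds (D + D)) : ψ ∈ upperBounds D := by
  intro δ₀ hδ₀
  have h0 : 0 ≤ ψ - δ₀ := by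
    refine nary hp hDf hDne ?_
    intro w hw
    rw [mem_ub_add] at hw
    have he : w + δ₀ - ψ ∈ upperBounds D := by
      intro δ hδ
      have h1 : ψ - δ₀ + δ ≤ w := hw _ rfl δ hδ
      refine shift h1 ?_; abel
    have h2 := h _ he
    intro δ hδ
    have h3 : δ + δ₀ ≤ ψ + (w + δ₀ - ψ) := h2 (Set.add_mem_add hδ hδ₀)
    refine shift h3 ?_; abel
  refine shift h0 ?_; abel

lemma densityCore (hp : IsPreRiesz X) {A B C D : Set X}
    (hAf : A.Finite) (hAne : A.Nonempty) (hDf : D.Finite) (hDne : D.Nonempty)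
    (H : ∀ d : X, upperBounds ({d} + B) ⊆ upperBounds A →
        upperBounds ({d} + D) ⊆ upperBounds C) :
    upperBounds (A + D) ⊆ upperBounds (C + B) := by
  intro v hv
  rw [mem_ub_add] at hv
  rw [mem_ub_add]
  intro c hc b hb
  have F : ∀ u ∈ upperBounds A, ∀ e ∈ upperBounds D, c ≤ u - b + e := by
    intro u hu e he
    have hd : upperBounds ({u - b} + B) ⊆ upperBounds A := by
      intro ω hω
      rw [mem_ub_add] at hω
      have h1 : u - b + b ≤ ω := hω _ rfl b hb
      have h2 : u ≤ ω := by rwa [sub_add_cancel] at h1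
      exact ub_up hu h2
    have h3 := H _ hd
    have h4 : u - b + e ∈ upperBounds ({u - b} + D) := by
      rw [mem_ub_add]
      intro s hs δ hδ
      rw [Set.mem_singleton_iff] at hs
      rw [hs]
      exact add_le_add_right (he hδ) _
    exact h3 h4 hc
  have h0 : 0 ≤ v - c - b := by
    refine nary hp (hAf.add hDf) (hAne.add hDne) ?_
    intro w hw
    rw [mem_ub_add] at hw
    rw [mem_ub_add]
    intro a ha δd hδd
    have hψ : w - a ∈ upperBounds D := by
      refine L4 hp hDf hDne ?_
      intro e he
      rw [mem_ub_add]
      intro δ hδ δ' hδ'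
      have hu' : w + c + b - a - δ - δ' ∈ upperBounds A := by
        intro a' ha'
        have h1 : v - c - b + (a + δ) ≤ w := hw _ rfl _ (Set.add_mem_add ha hδ)
        have h2 : a' + δ' ≤ v := hv a' ha' δ' hδ'
        refine shift (add_le_add h1 h2) ?_
        abel
      have h5 := F _ hu' e he
      refine shift h5 ?_
      abel
    have h6 := hψ hδd
    refine shift h6 ?_; abel
  refine shift h0 ?_; abel


-- ============ Part 2 : scalar helper lemmas ============

noncomputable section

def rp (r : ℝ) : ℝ := max r 0
def rn (r : ℝ) : ℝ := max (-r) 0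

lemma rp_nonneg (r : ℝ) : 0 ≤ rp r := le_max_right _ _
lemma rn_nonneg (r : ℝ) : 0 ≤ rn r := le_max_right _ _

lemma rp_eq (r : ℝ) : rp r = (r + |r|) / 2 := by
  rcases le_total 0 r with h | h
  · rw [rp, max_eq_left h, abs_of_nonneg h]; ring
  · rw [rp, max_eq_right h, abs_of_nonpos h]; ring

lemma rn_eq (r : ℝ) : rn r = (|r| - r) / 2 := by
  rcases le_total 0 r with h | h
  · rw [rn, max_eq_right (by linarith), abs_of_nonneg h]; ring
  · rw [rn, max_eq_left (by linarith), abs_of_nonpos h]; ring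

lemma rp_of_nonneg {r : ℝ} (h : 0 ≤ r) : rp r = r := max_eq_left h
lemma rn_of_nonneg {r : ℝ} (h : 0 ≤ r) : rn r = 0 := max_eq_right (by linarith)
lemma rp_one : rp 1 = 1 := rp_of_nonneg zero_le_one
lemma rn_one : rn 1 = 0 := rn_of_nonneg zero_le_one
lemma rp_zero : rp 0 = 0 := max_self 0
lemma rn_zero : rn 0 = 0 := by rw [rn, neg_zero, max_self]

lemma sm_add (r : ℝ) (A B : Set X) : r • (A + B) = r • A + r • B := by
  ext x
  simp only [Set.mem_smul_set, Set.mem_add]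
  constructor
  · rintro ⟨y, ⟨a, ha, b, hb, rfl⟩, rfl⟩
    exact ⟨r • a, smul_mem_smul_set ha, r • b, smul_mem_smul_set hb, (smul_add r a b).symm⟩
  · rintro ⟨_, ⟨a, ha, rfl⟩, _, ⟨b, hb, rfl⟩, rfl⟩
    exact ⟨a + b, ⟨a, ha, b, hb, rfl⟩, smul_add r a b⟩

lemma sm_sm (r s : ℝ) (A : Set X) : r • s • A = (r * s) • A := by rw [smul_smul]

lemma ub_smul_mono {r : ℝ} (hr : 0 < r) {S T : Set X}
    (h : upperBounds S ⊆ upperBounds T) : upperBounds (r • S) ⊆ upperBounds (r • T) := by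
  intro v hv
  rintro _ ⟨t, ht, rfl⟩
  have h1 : r⁻¹ • v ∈ upperBounds S := by
    intro s hs
    have h2 : r • s ≤ v := hv (smul_mem_smul_set hs)
    have h3 : r⁻¹ • (r • s) ≤ r⁻¹ • v :=
      smul_le_smul_of_nonneg_left h2 (inv_nonneg.mpr hr.le)
    rwa [inv_smul_smul₀ hr.ne' s] at h3
  have h4 : t ≤ r⁻¹ • v := h h1 ht
  have h5 : r • t ≤ r • (r⁻¹ • v) := smul_le_smul_of_nonneg_left h4 hr.le
  rwa [smul_inv_smul₀ hr.ne' v] at h5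

lemma ub_smul_congr {r : ℝ} (hr : 0 ≤ r) {S T : Set X} (hS : S.Nonempty) (hT : T.Nonempty)
    (h : upperBounds S = upperBounds T) : upperBounds (r • S) = upperBounds (r • T) := by
  rcases hr.eq_or_lt with rfl | hr
  · rw [Set.zero_smul_set hS, Set.zero_smul_set hT]
  · exact Set.Subset.antisymm (ub_smul_mono hr h.le) (ub_smul_mono hr h.ge)

lemma CX {a b : ℝ} (ha : 0 ≤ a) (hb : 0 ≤ b) {S : Set X} (hS : S.Nonempty) :
    upperBounds ((a + b) • S) = upperBounds (a • S + b • S) := by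
  rcases ha.eq_or_lt with rfl | ha'
  · rw [Set.zero_smul_set hS, zero_add, zero_add]
  rcases hb.eq_or_lt with rfl | hb'
  · rw [Set.zero_smul_set hS, add_zero, add_zero]
  have hc : 0 < a + b := by linarith
  apply Set.Subset.antisymm
  · intro v hv
    rintro _ ⟨_, ⟨x, hx, rfl⟩, _, ⟨y, hy, rfl⟩, rfl⟩
    have h1 : (a + b) • x ≤ v := hv (smul_mem_smul_set hx)
    have h2 : (a + b) • y ≤ v := hv (smul_mem_smul_set hy)
    have e1 : a • x = (a / (a + b)) • ((a + b) • x) := by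
      rw [smul_smul, div_mul_cancel₀ _ hc.ne']
    have e2 : b • y = (b / (a + b)) • ((a + b) • y) := by
      rw [smul_smul, div_mul_cancel₀ _ hc.ne']
    have h3 : a • x ≤ (a / (a + b)) • v := by
      rw [e1]; exact smul_le_smul_of_nonneg_left h1 (div_nonneg ha hc.le)
    have h4 : b • y ≤ (b / (a + b)) • v := by
      rw [e2]; exact smul_le_smul_of_nonneg_left h2 (div_nonneg hb hc.le)
    have h5 : a • x + b • y ≤ (a / (a + b)) • v + (b / (a + b)) • v := add_le_add h3 h4
    rwa [← add_smul, ← add_div, div_self hc.ne', one_smul] at h5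
  · intro v hv
    rintro _ ⟨x, hx, rfl⟩
    show (a + b) • x ≤ v
    rw [add_smul]
    exact hv (Set.add_mem_add (smul_mem_smul_set hx) (smul_mem_smul_set hx))

lemma ub6 {a1 a2 a3 b1 b2 b3 : ℝ}
    (h1 : 0 ≤ a1) (h2 : 0 ≤ a2) (h3 : 0 ≤ a3) (h4 : 0 ≤ b1) (h5 : 0 ≤ b2) (h6 : 0 ≤ b3)
    {A B : Set X} (hA : A.Nonempty) (hB : B.Nonempty) :
    upperBounds (a1 • A + a2 • A + a3 • A + (b1 • B + b2 • B + b3 • B)) =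
      upperBounds ((a1 + a2 + a3) • A + (b1 + b2 + b3) • B) := by
  calc upperBounds (a1 • A + a2 • A + a3 • A + (b1 • B + b2 • B + b3 • B))
      = upperBounds ((a1 • A + a2 • A) + (a3 • A + (b1 • B + b2 • B + b3 • B))) := by
        exact congrArg upperBounds (by abel)
    _ = upperBounds ((a1 + a2) • A + (a3 • A + (b1 • B + b2 • B + b3 • B))) := by
        exact ub_add_congr (CX h1 h2 hA).symm _
    _ = upperBounds (((a1 + a2) • A + a3 • A) + (b1 • B + b2 • B + b3 • B)) := by
        exact congrArg upperBounds (by abel)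
    _ = upperBounds ((a1 + a2 + a3) • A + (b1 • B + b2 • B + b3 • B)) := by
        exact ub_add_congr (CX (by linarith) h3 hA).symm _
    _ = upperBounds ((b1 • B + b2 • B) + (b3 • B + (a1 + a2 + a3) • A)) := by
        exact congrArg upperBounds (by abel)
    _ = upperBounds ((b1 + b2) • B + (b3 • B + (a1 + a2 + a3) • A)) := by
        exact ub_add_congr (CX h4 h5 hB).symm _
    _ = upperBounds (((b1 + b2) • B + b3 • B) + ((a1 + a2 + a3) • A)) := by
        exact congrArg upperBounds (by abel)
    _ = upperBounds ((b1 + b2 + b3) • B + (a1 + a2 + a3) • A) := by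
        exact ub_add_congr (CX (by linarith) h6 hB).symm _
    _ = upperBounds ((a1 + a2 + a3) • A + (b1 + b2 + b3) • B) := by
        exact congrArg upperBounds (by abel)

lemma master {a1 a2 a3 b1 b2 b3 c1 c2 c3 d1 d2 d3 : ℝ}
    (h1 : 0 ≤ a1) (h2 : 0 ≤ a2) (h3 : 0 ≤ a3) (h4 : 0 ≤ b1) (h5 : 0 ≤ b2) (h6 : 0 ≤ b3)
    (h7 : 0 ≤ c1) (h8 : 0 ≤ c2) (h9 : 0 ≤ c3) (h10 : 0 ≤ d1) (h11 : 0 ≤ d2) (h12 : 0 ≤ d3)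
    {A B : Set X} (hA : A.Nonempty) (hB : B.Nonempty)
    (hac : a1 + a2 + a3 = c1 + c2 + c3) (hbd : b1 + b2 + b3 = d1 + d2 + d3) :
    upperBounds (a1 • A + a2 • A + a3 • A + (b1 • B + b2 • B + b3 • B)) =
      upperBounds (c1 • A + c2 • A + c3 • A + (d1 • B + d2 • B + d3 • B)) := by
  rw [ub6 h1 h2 h3 h4 h5 h6 hA hB, ub6 h7 h8 h9 h10 h11 h12 hA hB, hac, hbd]

end


-- ============ Part 3 : the Riesz completion ============

noncomputable section

variable (X) in
abbrev FS := {s : Set X // s.Finite ∧ s.Nonempty}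

variable (X) in
abbrev Pre := FS X × FS X

def fadd (s t : FS X) : FS X := ⟨s.1 + t.1, s.2.1.add t.2.1, s.2.2.add t.2.2⟩
def fzero : FS X := ⟨{0}, Set.finite_singleton 0, Set.singleton_nonempty 0⟩
def fsing (x : X) : FS X := ⟨{x}, Set.finite_singleton x, Set.singleton_nonempty x⟩
def fsm (r : ℝ) (s t : FS X) : FS X :=
  ⟨rp r • s.1 + rn r • t.1, (s.2.1.smul_set).add (t.2.1.smul_set),
    (s.2.2.smul_set).add (t.2.2.smul_set)⟩

def padd (p q : Pre X) : Pre X := (fadd p.1 q.1, fadd p.2 q.2)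
def pneg (p : Pre X) : Pre X := (p.2, p.1)
def pzero : Pre X := (fzero, fzero)
def psmul (r : ℝ) (p : Pre X) : Pre X := (fsm r p.1 p.2, fsm r p.2 p.1)
def psup (p q : Pre X) : Pre X :=
  (⟨(p.1.1 + q.2.1) ∪ (q.1.1 + p.2.1),
    (p.1.2.1.add q.2.2.1).union (q.1.2.1.add p.2.2.1),
    (p.1.2.2.add q.2.2.2).mono Set.subset_union_left⟩, fadd p.2 q.2)
def pinf (p q : Pre X) : Pre X :=
  (fadd p.1 q.1,
   ⟨(p.2.1 + q.1.1) ∪ (q.2.1 + p.1.1),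
    (p.2.2.1.add q.1.2.1).union (q.2.2.1.add p.1.2.1),
    (p.2.2.2.add q.1.2.2).mono Set.subset_union_left⟩)

def Rle (p q : Pre X) : Prop :=
  upperBounds (q.1.1 + p.2.1) ⊆ upperBounds (p.1.1 + q.2.1)

lemma Rle_refl (p : Pre X) : Rle p p := fun _ hv => hv

lemma Rle_of_eq {p q : Pre X} (h : p = q) : Rle p q := h ▸ Rle_refl p

lemma pre_eq {p q : Pre X} (h1 : p.1.1 = q.1.1) (h2 : p.2.1 = q.2.1) : p = q :=
  Prod.ext (Subtype.ext h1) (Subtype.ext h2)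

lemma ub_sub_of_eq {S T : Set X} (e : S = T) : upperBounds S ⊆ upperBounds T := by rw [e]

lemma Rle_trans (hp : IsPreRiesz X) {p q r : Pre X} (h1 : Rle p q) (h2 : Rle q r) : Rle p r := by
  refine cancel hp (q.1.2.1.add q.2.2.1) (q.1.2.2.add q.2.2.2) ?_
  intro v hv
  have e1 : r.1.1 + p.2.1 + (q.1.1 + q.2.1) = (r.1.1 + q.2.1) + (p.2.1 + q.1.1) := by abel
  have hv1 := ub_add_mono h2 (p.2.1 + q.1.1) (ub_sub_of_eq e1 hv)
  have e2 : (q.1.1 + r.2.1) + (p.2.1 + q.1.1) = (q.1.1 + p.2.1) + (r.2.1 + q.1.1) := by abel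
  have hv2 := ub_add_mono h1 (r.2.1 + q.1.1) (ub_sub_of_eq e2 hv1)
  refine ub_sub_of_eq ?_ hv2
  abel

lemma Rle_add {p p' q q' : Pre X} (h1 : Rle p p') (h2 : Rle q q') :
    Rle (padd p q) (padd p' q') := by
  intro v hv
  have e1 : (p'.1.1 + q'.1.1) + (p.2.1 + q.2.1) = (p'.1.1 + p.2.1) + (q'.1.1 + q.2.1) := by
    abel
  have hv1 := ub_add_mono h1 (q'.1.1 + q.2.1) (ub_sub_of_eq e1 hv)
  have e2 : (p.1.1 + p'.2.1) + (q'.1.1 + q.2.1) = (q'.1.1 + q.2.1) + (p.1.1 + p'.2.1) := by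
    abel
  have hv2 := ub_add_mono h2 (p.1.1 + p'.2.1) (ub_sub_of_eq e2 hv1)
  refine ub_sub_of_eq ?_ hv2
  simp only [padd, fadd]
  abel

lemma Rle_neg {p q : Pre X} (h : Rle q p) : Rle (pneg p) (pneg q) := by
  intro v hv
  have hv1 : v ∈ upperBounds (p.1.1 + q.2.1) :=
    ub_sub_of_eq (by simp only [pneg]; abel) hv
  exact ub_sub_of_eq (by simp only [pneg]; abel) (h hv1)

def EE (p q : Pre X) : Prop := Rle p q ∧ Rle q p

lemma EE_of_eq {p q : Pre X} (h : p = q) : EE p q := ⟨Rle_of_eq h, Rle_of_eq h.symm⟩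

lemma EE_of_ub_eq {p q : Pre X}
    (h : upperBounds (p.1.1 + q.2.1) = upperBounds (q.1.1 + p.2.1)) : EE p q :=
  ⟨h.ge, h.le⟩

def yst (hp : IsPreRiesz X) : Setoid (Pre X) :=
  ⟨EE, fun p => ⟨Rle_refl p, Rle_refl p⟩, fun h => ⟨h.2, h.1⟩,
    fun h1 h2 => ⟨Rle_trans hp h1.1 h2.1, Rle_trans hp h2.2 h1.2⟩⟩

variable (hp : IsPreRiesz X)

def Y := Quotient (yst hp)

def mk' (p : Pre X) : Y hp := Quotient.mk (yst hp) p

lemma yadd_resp : ∀ p p' : Pre X, EE p p' → ∀ q q' : Pre X, EE q q' →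
    EE (padd p q) (padd p' q') :=
  fun _ _ hpp _ _ hqq => ⟨Rle_add hpp.1 hqq.1, Rle_add hpp.2 hqq.2⟩

instance yAdd : Add (Y hp) :=
  ⟨@Quotient.map₂ _ _ (yst hp) (yst hp) _ (yst hp) padd yadd_resp⟩
instance yZero : Zero (Y hp) := ⟨mk' hp pzero⟩
instance yNeg : Neg (Y hp) :=
  ⟨@Quotient.map _ _ (yst hp) (yst hp) pneg (fun _ _ h => ⟨Rle_neg h.2, Rle_neg h.1⟩)⟩

instance yAddCommGroup : AddCommGroup (Y hp) where
  add := (· + ·)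
  zero := 0
  neg := Neg.neg
  nsmul := nsmulRec
  zsmul := zsmulRec
  add_assoc := by
    rintro ⟨p⟩ ⟨q⟩ ⟨r⟩
    exact Quotient.sound (EE_of_eq (pre_eq (add_assoc _ _ _) (add_assoc _ _ _)))
  zero_add := by
    rintro ⟨p⟩
    refine Quotient.sound (EE_of_eq (pre_eq ?_ ?_)) <;>
      · show ({0} : Set X) + _ = _
        simp [Set.singleton_add]
  add_zero := by
    rintro ⟨p⟩
    refine Quotient.sound (EE_of_eq (pre_eq ?_ ?_)) <;>
      · show _ + ({0} : Set X) = _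
        simp [Set.add_singleton]
  add_comm := by
    rintro ⟨p⟩ ⟨q⟩
    exact Quotient.sound (EE_of_eq (pre_eq (add_comm _ _) (add_comm _ _)))
  neg_add_cancel := by
    rintro ⟨p⟩
    refine Quotient.sound (EE_of_ub_eq ?_)
    show upperBounds ((p.2.1 + p.1.1) + ({0} : Set X)) =
      upperBounds (({0} : Set X) + (p.1.1 + p.2.1))
    refine congrArg upperBounds ?_
    have h0 : ({0} : Set X) = 0 := rfl
    rw [h0]
    abel

instance yPartialOrder : PartialOrder (Y hp) where
  le := @Quotient.lift₂ _ _ _ (yst hp) (yst hp) Rle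
    (fun p q p' q' ep eq => propext
      ⟨fun h => Rle_trans hp (Rle_trans hp ep.2 h) eq.1,
       fun h => Rle_trans hp (Rle_trans hp ep.1 h) eq.2⟩)
  le_refl := by rintro ⟨p⟩; exact Rle_refl p
  le_trans := by rintro ⟨p⟩ ⟨q⟩ ⟨r⟩ h1 h2; exact Rle_trans hp h1 h2
  le_antisymm := by rintro ⟨p⟩ ⟨q⟩ h1 h2; exact Quotient.sound ⟨h1, h2⟩

instance yCovariant : CovariantClass (Y hp) (Y hp) (· + ·) (· ≤ ·) := by
  constructor
  rintro ⟨a⟩ ⟨b⟩ ⟨c⟩ h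
  exact Rle_add (Rle_refl a) h

end


-- ============ Part 3b : lattice, module ============

section P3b
variable {X : Type} [AddCommGroup X] [PartialOrder X]
    [CovariantClass X X (· + ·) (· ≤ ·)] [Module ℝ X] [PosSMulMono ℝ X]

lemma ub_union_add (S T R : Set X) :
    upperBounds ((S ∪ T) + R) = upperBounds (S + R) ∩ upperBounds (T + R) := by
  rw [Set.union_add, upperBounds_union]

lemma ub_add_union (S T R : Set X) :
    upperBounds (S + (T ∪ R)) = upperBounds (S + T) ∩ upperBounds (S + R) := by
  rw [Set.add_union, upperBounds_union]

lemma Rle_sup {p p' q q' : Pre X} (h1 : EE p p') (h2 : EE q q') :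
    Rle (psup p q) (psup p' q') := by
  show upperBounds (((p'.1.1 + q'.2.1) ∪ (q'.1.1 + p'.2.1)) + (p.2.1 + q.2.1)) ⊆
    upperBounds (((p.1.1 + q.2.1) ∪ (q.1.1 + p.2.1)) + (p'.2.1 + q'.2.1))
  rw [ub_union_add, ub_union_add]
  rintro v ⟨hva, hvb⟩
  constructor
  · have s1 := ub_sub_of_eq
      (show (p'.1.1 + q'.2.1) + (p.2.1 + q.2.1) = (p'.1.1 + p.2.1) + (q'.2.1 + q.2.1) by abel) hva
    have s2 := ub_add_mono h1.1 (q'.2.1 + q.2.1) s1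
    exact ub_sub_of_eq (by abel) s2
  · have s1 := ub_sub_of_eq
      (show (q'.1.1 + p'.2.1) + (p.2.1 + q.2.1) = (q'.1.1 + q.2.1) + (p'.2.1 + p.2.1) by abel) hvb
    have s2 := ub_add_mono h2.1 (p'.2.1 + p.2.1) s1
    exact ub_sub_of_eq (by abel) s2

lemma Rle_inf {p p' q q' : Pre X} (h1 : EE p p') (h2 : EE q q') :
    Rle (pinf p q) (pinf p' q') := by
  show upperBounds ((p'.1.1 + q'.1.1) + ((p.2.1 + q.1.1) ∪ (q.2.1 + p.1.1))) ⊆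
    upperBounds ((p.1.1 + q.1.1) + ((p'.2.1 + q'.1.1) ∪ (q'.2.1 + p'.1.1)))
  rw [ub_add_union, ub_add_union]
  rintro v ⟨hva, hvb⟩
  constructor
  · have s1 := ub_sub_of_eq
      (show (p'.1.1 + q'.1.1) + (p.2.1 + q.1.1) = (p'.1.1 + p.2.1) + (q'.1.1 + q.1.1) by abel) hva
    have s2 := ub_add_mono h1.1 (q'.1.1 + q.1.1) s1
    exact ub_sub_of_eq (by abel) s2
  · have s1 := ub_sub_of_eq
      (show (p'.1.1 + q'.1.1) + (q.2.1 + p.1.1) = (q'.1.1 + q.2.1) + (p'.1.1 + p.1.1) by abel) hvb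
    have s2 := ub_add_mono h2.1 (p'.1.1 + p.1.1) s1
    exact ub_sub_of_eq (by abel) s2

variable (hp : IsPreRiesz X)

instance yLattice : Lattice (Y hp) :=
  { yPartialOrder hp with
    sup := @Quotient.map₂ _ _ (yst hp) (yst hp) _ (yst hp) psup
      (fun _ _ h1 _ _ h2 => ⟨Rle_sup h1 h2, Rle_sup ⟨h1.2, h1.1⟩ ⟨h2.2, h2.1⟩⟩)
    le_sup_left := by
      rintro ⟨p⟩ ⟨q⟩
      show Rle p (psup p q)
      show upperBounds (((p.1.1 + q.2.1) ∪ (q.1.1 + p.2.1)) + p.2.1) ⊆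
        upperBounds (p.1.1 + (p.2.1 + q.2.1))
      rw [ub_union_add]
      rintro v ⟨hva, _⟩
      exact ub_sub_of_eq (by abel) hva
    le_sup_right := by
      rintro ⟨p⟩ ⟨q⟩
      show Rle q (psup p q)
      show upperBounds (((p.1.1 + q.2.1) ∪ (q.1.1 + p.2.1)) + q.2.1) ⊆
        upperBounds (q.1.1 + (p.2.1 + q.2.1))
      rw [ub_union_add]
      rintro v ⟨_, hvb⟩
      exact ub_sub_of_eq (by abel) hvb
    sup_le := by
      rintro ⟨p⟩ ⟨q⟩ ⟨r⟩ h1 h2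
      show Rle (psup p q) r
      show upperBounds (r.1.1 + (p.2.1 + q.2.1)) ⊆
        upperBounds (((p.1.1 + q.2.1) ∪ (q.1.1 + p.2.1)) + r.2.1)
      rw [ub_union_add]
      intro v hv
      constructor
      · have s1 := ub_sub_of_eq
          (show r.1.1 + (p.2.1 + q.2.1) = (r.1.1 + p.2.1) + q.2.1 by abel) hv
        have s2 := ub_add_mono h1 q.2.1 s1
        exact ub_sub_of_eq (by abel) s2
      · have s1 := ub_sub_of_eq
          (show r.1.1 + (p.2.1 + q.2.1) = (r.1.1 + q.2.1) + p.2.1 by abel) hv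
        have s2 := ub_add_mono h2 p.2.1 s1
        exact ub_sub_of_eq (by abel) s2
    inf := @Quotient.map₂ _ _ (yst hp) (yst hp) _ (yst hp) pinf
      (fun _ _ h1 _ _ h2 => ⟨Rle_inf h1 h2, Rle_inf ⟨h1.2, h1.1⟩ ⟨h2.2, h2.1⟩⟩)
    inf_le_left := by
      rintro ⟨p⟩ ⟨q⟩
      show Rle (pinf p q) p
      show upperBounds (p.1.1 + ((p.2.1 + q.1.1) ∪ (q.2.1 + p.1.1))) ⊆
        upperBounds ((p.1.1 + q.1.1) + p.2.1)
      rw [ub_add_union]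
      rintro v ⟨hva, _⟩
      exact ub_sub_of_eq (by abel) hva
    inf_le_right := by
      rintro ⟨p⟩ ⟨q⟩
      show Rle (pinf p q) q
      show upperBounds (q.1.1 + ((p.2.1 + q.1.1) ∪ (q.2.1 + p.1.1))) ⊆
        upperBounds ((p.1.1 + q.1.1) + q.2.1)
      rw [ub_add_union]
      rintro v ⟨_, hvb⟩
      exact ub_sub_of_eq (by abel) hvb
    le_inf := by
      rintro ⟨p⟩ ⟨q⟩ ⟨r⟩ h1 h2
      show Rle p (pinf q r)
      show upperBounds ((q.1.1 + r.1.1) + p.2.1) ⊆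
        upperBounds (p.1.1 + ((q.2.1 + r.1.1) ∪ (r.2.1 + q.1.1)))
      rw [ub_add_union]
      intro v hv
      constructor
      · have s1 := ub_sub_of_eq
          (show (q.1.1 + r.1.1) + p.2.1 = (q.1.1 + p.2.1) + r.1.1 by abel) hv
        have s2 := ub_add_mono h1 r.1.1 s1
        exact ub_sub_of_eq (by abel) s2
      · have s1 := ub_sub_of_eq
          (show (q.1.1 + r.1.1) + p.2.1 = (r.1.1 + p.2.1) + q.1.1 by abel) hv
        have s2 := ub_add_mono h2 q.1.1 s1
        exact ub_sub_of_eq (by abel) s2 }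

lemma EE_smul {r : ℝ} {p q : Pre X} (h : EE p q) : EE (psmul r p) (psmul r q) := by
  apply EE_of_ub_eq
  have hE : upperBounds (p.1.1 + q.2.1) = upperBounds (q.1.1 + p.2.1) :=
    Set.Subset.antisymm h.2 h.1
  have hE' : upperBounds (p.2.1 + q.1.1) = upperBounds (q.2.1 + p.1.1) := by
    rw [add_comm p.2.1 q.1.1, add_comm q.2.1 p.1.1]
    exact hE.symm
  show upperBounds ((rp r • p.1.1 + rn r • p.2.1) + (rp r • q.2.1 + rn r • q.1.1)) =
    upperBounds ((rp r • q.1.1 + rn r • q.2.1) + (rp r • p.2.1 + rn r • p.1.1))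
  calc upperBounds ((rp r • p.1.1 + rn r • p.2.1) + (rp r • q.2.1 + rn r • q.1.1))
      = upperBounds (rp r • (p.1.1 + q.2.1) + rn r • (p.2.1 + q.1.1)) := by
        exact congrArg upperBounds (by rw [sm_add, sm_add]; abel)
    _ = upperBounds (rp r • (q.1.1 + p.2.1) + rn r • (p.2.1 + q.1.1)) := by
        exact ub_add_congr (ub_smul_congr (rp_nonneg r) (p.1.2.2.add q.2.2.2)
          (q.1.2.2.add p.2.2.2) hE) _
    _ = upperBounds (rn r • (p.2.1 + q.1.1) + rp r • (q.1.1 + p.2.1)) := by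
        exact congrArg upperBounds (add_comm _ _)
    _ = upperBounds (rn r • (q.2.1 + p.1.1) + rp r • (q.1.1 + p.2.1)) := by
        exact ub_add_congr (ub_smul_congr (rn_nonneg r) (p.2.2.2.add q.1.2.2)
          (q.2.2.2.add p.1.2.2) hE') _
    _ = upperBounds ((rp r • q.1.1 + rn r • q.2.1) + (rp r • p.2.1 + rn r • p.1.1)) := by
        exact congrArg upperBounds (by rw [sm_add, sm_add]; abel)

instance ySMul : SMul ℝ (Y hp) :=
  ⟨fun r => @Quotient.map _ _ (yst hp) (yst hp) (psmul r) (fun _ _ h => EE_smul h)⟩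

instance yModule : Module ℝ (Y hp) where
  smul := (· • ·)
  one_smul := by
    rintro ⟨p⟩
    refine Quotient.sound (EE_of_eq (pre_eq ?_ ?_))
    · show rp 1 • p.1.1 + rn 1 • p.2.1 = p.1.1
      rw [rp_one, rn_one, one_smul, Set.zero_smul_set p.2.2.2]
      exact add_zero _
    · show rp 1 • p.2.1 + rn 1 • p.1.1 = p.2.1
      rw [rp_one, rn_one, one_smul, Set.zero_smul_set p.1.2.2]
      exact add_zero _
  mul_smul := by
    intro r s
    rintro ⟨p⟩
    refine Quotient.sound (EE_of_ub_eq ?_)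
    show upperBounds ((rp (r*s) • p.1.1 + rn (r*s) • p.2.1) +
        (rp r • (rp s • p.2.1 + rn s • p.1.1) + rn r • (rp s • p.1.1 + rn s • p.2.1))) =
      upperBounds ((rp r • (rp s • p.1.1 + rn s • p.2.1) + rn r • (rp s • p.2.1 + rn s • p.1.1)) +
        (rp (r*s) • p.2.1 + rn (r*s) • p.1.1))
    have hA := p.1.2.2
    have hB := p.2.2.2
    calc upperBounds ((rp (r*s) • p.1.1 + rn (r*s) • p.2.1) +
        (rp r • (rp s • p.2.1 + rn s • p.1.1) + rn r • (rp s • p.1.1 + rn s • p.2.1)))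
        = upperBounds (rp (r*s) • p.1.1 + (rp r * rn s) • p.1.1 + (rn r * rp s) • p.1.1 +
            (rn (r*s) • p.2.1 + (rp r * rp s) • p.2.1 + (rn r * rn s) • p.2.1)) := by
          refine congrArg upperBounds ?_
          rw [sm_add, sm_add, sm_sm, sm_sm, sm_sm, sm_sm]
          abel
      _ = upperBounds ((rp r * rp s) • p.1.1 + (rn r * rn s) • p.1.1 + rn (r*s) • p.1.1 +
            ((rp r * rn s) • p.2.1 + (rn r * rp s) • p.2.1 + rp (r*s) • p.2.1)) := by
          refine master (rp_nonneg _) (mul_nonneg (rp_nonneg _) (rn_nonneg _))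
            (mul_nonneg (rn_nonneg _) (rp_nonneg _)) (rn_nonneg _)
            (mul_nonneg (rp_nonneg _) (rp_nonneg _)) (mul_nonneg (rn_nonneg _) (rn_nonneg _))
            (mul_nonneg (rp_nonneg _) (rp_nonneg _)) (mul_nonneg (rn_nonneg _) (rn_nonneg _))
            (rn_nonneg _) (mul_nonneg (rp_nonneg _) (rn_nonneg _))
            (mul_nonneg (rn_nonneg _) (rp_nonneg _)) (rp_nonneg _) hA hB ?_ ?_
          · simp only [rp_eq, rn_eq, abs_mul]; ring
          · simp only [rp_eq, rn_eq, abs_mul]; ring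
      _ = upperBounds ((rp r • (rp s • p.1.1 + rn s • p.2.1) + rn r • (rp s • p.2.1 + rn s • p.1.1)) +
            (rp (r*s) • p.2.1 + rn (r*s) • p.1.1)) := by
          refine congrArg upperBounds ?_
          rw [sm_add, sm_add, sm_sm, sm_sm, sm_sm, sm_sm]
          abel
  smul_zero := by
    intro r
    refine Quotient.sound (EE_of_eq (pre_eq ?_ ?_)) <;>
    · show rp r • ({0} : Set X) + rn r • ({0} : Set X) = ({0} : Set X)
      rw [Set.smul_set_singleton, Set.smul_set_singleton, smul_zero, smul_zero,
        Set.singleton_add_singleton, add_zero]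
  smul_add := by
    intro r
    rintro ⟨p⟩ ⟨q⟩
    refine Quotient.sound (EE_of_eq (pre_eq ?_ ?_)) <;>
    · show rp r • (_ + _) + rn r • (_ + _) = _
      rw [sm_add, sm_add]
      show _ = (rp r • _ + rn r • _) + (rp r • _ + rn r • _)
      abel
  add_smul := by
    intro r s
    rintro ⟨p⟩
    refine Quotient.sound (EE_of_ub_eq ?_)
    show upperBounds ((rp (r+s) • p.1.1 + rn (r+s) • p.2.1) +
        ((rp r • p.2.1 + rn r • p.1.1) + (rp s • p.2.1 + rn s • p.1.1))) =
      upperBounds (((rp r • p.1.1 + rn r • p.2.1) + (rp s • p.1.1 + rn s • p.2.1)) +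
        (rp (r+s) • p.2.1 + rn (r+s) • p.1.1))
    have hA := p.1.2.2
    have hB := p.2.2.2
    calc upperBounds ((rp (r+s) • p.1.1 + rn (r+s) • p.2.1) +
        ((rp r • p.2.1 + rn r • p.1.1) + (rp s • p.2.1 + rn s • p.1.1)))
        = upperBounds (rp (r+s) • p.1.1 + rn r • p.1.1 + rn s • p.1.1 +
            (rn (r+s) • p.2.1 + rp r • p.2.1 + rp s • p.2.1)) := by
          exact congrArg upperBounds (by abel)
      _ = upperBounds (rp r • p.1.1 + rp s • p.1.1 + rn (r+s) • p.1.1 +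
            (rn r • p.2.1 + rn s • p.2.1 + rp (r+s) • p.2.1)) := by
          refine master (rp_nonneg _) (rn_nonneg _) (rn_nonneg _) (rn_nonneg _)
            (rp_nonneg _) (rp_nonneg _) (rp_nonneg _) (rp_nonneg _) (rn_nonneg _)
            (rn_nonneg _) (rn_nonneg _) (rp_nonneg _) hA hB ?_ ?_
          · simp only [rp_eq, rn_eq]; ring
          · simp only [rp_eq, rn_eq]; ring
      _ = upperBounds (((rp r • p.1.1 + rn r • p.2.1) + (rp s • p.1.1 + rn s • p.2.1)) +
            (rp (r+s) • p.2.1 + rn (r+s) • p.1.1)) := by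
          exact congrArg upperBounds (by abel)
  zero_smul := by
    rintro ⟨p⟩
    refine Quotient.sound (EE_of_eq (pre_eq ?_ ?_))
    · show rp 0 • p.1.1 + rn 0 • p.2.1 = ({0} : Set X)
      rw [rp_zero, rn_zero, Set.zero_smul_set p.1.2.2, Set.zero_smul_set p.2.2.2, add_zero]
      rfl
    · show rp 0 • p.2.1 + rn 0 • p.1.1 = ({0} : Set X)
      rw [rp_zero, rn_zero, Set.zero_smul_set p.2.2.2, Set.zero_smul_set p.1.2.2, add_zero]
      rfl

lemma Rle_smul_pos {r : ℝ} (hr : 0 < r) {p q : Pre X} (h : Rle p q) :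
    Rle (psmul r p) (psmul r q) := by
  show upperBounds ((rp r • q.1.1 + rn r • q.2.1) + (rp r • p.2.1 + rn r • p.1.1)) ⊆
    upperBounds ((rp r • p.1.1 + rn r • p.2.1) + (rp r • q.2.1 + rn r • q.1.1))
  rw [rp_of_nonneg hr.le, rn_of_nonneg hr.le, Set.zero_smul_set q.2.2.2,
    Set.zero_smul_set p.1.2.2, Set.zero_smul_set p.2.2.2, Set.zero_smul_set q.1.2.2]
  refine (ub_sub_of_eq (show (r • q.1.1 + 0) + (r • p.2.1 + 0) = r • (q.1.1 + p.2.1) by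
    rw [sm_add]; abel)).trans ?_
  refine (ub_smul_mono hr h).trans ?_
  refine ub_sub_of_eq (show r • (p.1.1 + q.2.1) = (r • p.1.1 + 0) + (r • q.2.1 + 0) by
    rw [sm_add]; abel)

instance yPSM : PosSMulMono ℝ (Y hp) := by
  constructor
  intro r hr b1 b2 hb
  rcases hr.eq_or_lt with rfl | hr'
  · exact le_of_eq ((zero_smul ℝ b1).trans (zero_smul ℝ b2).symm)
  · revert hb
    obtain ⟨p, rfl⟩ := Quotient.exists_rep b1
    obtain ⟨q, rfl⟩ := Quotient.exists_rep b2
    intro hb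
    exact Rle_smul_pos hr' hb

end P3b


-- ============ Part 3c : embedding, bipositivity, density ============

section P3c
variable {X : Type} [AddCommGroup X] [PartialOrder X]
    [CovariantClass X X (· + ·) (· ≤ ·)] [Module ℝ X] [PosSMulMono ℝ X]
variable (hp : IsPreRiesz X)

lemma rp_eq_add (r : ℝ) : rp r = r + rn r := by rw [rp_eq, rn_eq]; ring

def iL : X →ₗ[ℝ] Y hp where
  toFun x := mk' hp (fsing x, fzero)
  map_add' x y := by
    refine (Quotient.sound (EE_of_eq (pre_eq ?_ ?_))).symm
    · show ({x} : Set X) + {y} = {x + y}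
      rw [Set.singleton_add_singleton]
    · show ({0} : Set X) + {0} = {0}
      rw [Set.singleton_add_singleton, add_zero]
  map_smul' r x := by
    show mk' hp (fsing (r • x), fzero) = mk' hp (psmul r (fsing x, fzero))
    refine Quotient.sound (EE_of_ub_eq ?_)
    show upperBounds (({r • x} : Set X) + (rp r • ({0} : Set X) + rn r • ({x} : Set X))) =
      upperBounds ((rp r • ({x} : Set X) + rn r • ({0} : Set X)) + ({0} : Set X))
    refine congrArg upperBounds ?_
    simp only [Set.smul_set_singleton, smul_zero, Set.singleton_add_singleton]
    congr 1
    rw [rp_eq_add r, add_smul]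
    abel

lemma ybip : ∀ x : X, 0 ≤ x ↔ 0 ≤ iL hp x := by
  intro x
  constructor
  · intro hx
    show Rle pzero (fsing x, fzero)
    intro v hv
    have h1 : x + 0 ≤ v := hv (Set.add_mem_add rfl rfl)
    rintro w hw
    show w ≤ v
    have hw' : w ∈ ({0} : Set X) + ({0} : Set X) := hw
    rw [Set.singleton_add_singleton, add_zero, Set.mem_singleton_iff] at hw'
    rw [hw']
    calc (0 : X) = 0 + 0 := (add_zero 0).symm
      _ ≤ x + 0 := add_le_add_left hx 0
      _ ≤ v := h1
  · intro h
    have h1 : x + 0 ∈ upperBounds (({x} : Set X) + ({0} : Set X)) := by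
      rw [mem_ub_add]
      intro s hs t ht
      rw [Set.mem_singleton_iff] at hs ht
      rw [hs, ht]
    have h2 := h h1
    have h3 : (0 : X) + 0 ≤ x + 0 := h2 (Set.add_mem_add rfl rfl)
    simpa using h3

lemma ydense : ∀ y : Y hp, IsGLB {z : Y hp | z ∈ Set.range (iL hp) ∧ y ≤ z} y := by
  intro y
  obtain ⟨p, rfl⟩ := Quotient.exists_rep y
  constructor
  · exact fun z hz => hz.2
  · intro w hw
    obtain ⟨q, rfl⟩ := Quotient.exists_rep w
    show Rle q p
    refine densityCore hp p.1.2.1 p.1.2.2 q.2.2.1 q.2.2.2 ?_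
    intro d hd
    have h1 : mk' hp p ≤ iL hp d := by
      show Rle p (fsing d, fzero)
      intro v hv
      have h2 := hd hv
      refine ub_sub_of_eq ?_ h2
      show p.1.1 = p.1.1 + ({0} : Set X)
      simp [Set.add_singleton]
    have h3 : mk' hp q ≤ iL hp d := hw ⟨⟨d, rfl⟩, h1⟩
    intro v hv
    have h4 := h3 hv
    refine ub_sub_of_eq ?_ h4
    show q.1.1 + ({0} : Set X) = q.1.1
    simp [Set.add_singleton]

end P3c

end VH


/-- A directed partially ordered vector space `X` is a pre-Riesz space iff
there exist a vector lattice `Y` and a bipositive linear map `i : X → Y` with order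
dense range. -/
theorem statement0 {X : Type} [AddCommGroup X] [PartialOrder X]
    [CovariantClass X X (· + ·) (· ≤ ·)] [Module ℝ X] [PosSMulMono ℝ X]
    [IsDirected X (· ≤ ·)] :
    IsPreRiesz X ↔
      ∃ (Y : Type) (_ : AddCommGroup Y) (_ : Lattice Y)
        (_ : CovariantClass Y Y (· + ·) (· ≤ ·)) (_ : Module ℝ Y) (_ : PosSMulMono ℝ Y)
        (i : X →ₗ[ℝ] Y), IsBipositive i ∧ OrderDenseRange i := by
  constructor
  · intro hp
    exact ⟨VH.Y hp, VH.yAddCommGroup hp, VH.yLattice hp, VH.yCovariant hp, VH.yModule hp,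
      VH.yPSM hp, VH.iL hp, VH.ybip hp, VH.ydense hp⟩
  · rintro ⟨Yt, iAG, iLat, iCov, iMod, iPSM, i, hbi, hod⟩
    intro x y z h
    have imono : ∀ a b : X, a ≤ b → i a ≤ i b := by
      intro a b hab
      have h1 : 0 ≤ i (b - a) := (hbi (b - a)).mp (by rwa [sub_nonneg])
      rw [map_sub] at h1
      exact sub_nonneg.mp h1
    set s := i y ⊔ i z with hs
    have claim : s - i x ∈ lowerBounds {w : Yt | w ∈ Set.range i ∧ s ≤ w} := by
      rintro w ⟨⟨d, rfl⟩, hsw⟩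
      have hyd : y ≤ d := by
        have h1 : i y ≤ i d := le_sup_left.trans hsw
        have h2 : 0 ≤ i (d - y) := by rw [map_sub]; exact sub_nonneg.mpr h1
        exact sub_nonneg.mp ((hbi (d - y)).mpr h2)
      have hzd : z ≤ d := by
        have h1 : i z ≤ i d := le_sup_right.trans hsw
        have h2 : 0 ≤ i (d - z) := by rw [map_sub]; exact sub_nonneg.mpr h1
        exact sub_nonneg.mp ((hbi (d - z)).mpr h2)
      have hd2 : x + d ∈ upperBounds ({x + y, x + z} : Set X) := by
        rintro u hu
        rw [Set.mem_insert_iff] at hu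
        rcases hu with rfl | hu
        · exact add_le_add_right hyd x
        · rw [Set.mem_singleton_iff] at hu
          rw [hu]
          exact add_le_add_right hzd x
      have hd3 := h hd2
      have hy2 : y ≤ x + d := hd3 (Set.mem_insert _ _)
      have hz2 : z ≤ x + d := hd3 (Set.mem_insert_iff.mpr (Or.inr rfl))
      have hsd : s ≤ i (x + d) := sup_le (imono _ _ hy2) (imono _ _ hz2)
      rw [map_add] at hsd
      exact sub_le_iff_le_add'.mpr hsd
    have h4 : s - i x ≤ s := (hod s).2 claim
    have h5 : 0 ≤ i x := (sub_le_self_iff s).mp h4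
    exact (hbi x).mpr h5
end

section
/- Let X be a directed partially ordered vector space with a seminorm p, and let i : X → Y be a bipositive linear map into a directed partially ordered vector space Y such that i(X) is majorizing in Y. Define p_r(y) = inf{p(x) : x ∈ X, -i(x) ≤ y ≤ i(x)}. Then p_r is the greatest regular seminorm on Y satisfying p_r ≤ p on the positive cone of X (identified via i). -/
open Set Filter

section Prelude

variable {E F : Type*}

/-- Archimedean property of a partially ordered group. -/
def ArchimedeanOrder' (E : Type*) [AddCommGroup E] [PartialOrder E] : Prop :=
  ∀ x y : E, (∀ n : ℕ, n • x ≤ y) → x ≤ 0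

end Prelude

/-- the regular extension `p_r` is the greatest regular seminorm on `Y`
with `p_r ≤ p` on the positive cone of `X`. -/
theorem statement1 {X Y : Type*}
    [AddCommGroup X] [PartialOrder X] [CovariantClass X X (· + ·) (· ≤ ·)]
    [Module ℝ X] [PosSMulMono ℝ X] [IsDirected X (· ≤ ·)]
    [AddCommGroup Y] [PartialOrder Y] [CovariantClass Y Y (· + ·) (· ≤ ·)]
    [Module ℝ Y] [PosSMulMono ℝ Y] [IsDirected Y (· ≤ ·)]
    (p : Seminorm ℝ X) (i : X →ₗ[ℝ] Y)
    (hbi : IsBipositive i) (hmaj : MajorizingRange i) :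
    ∃ q : Seminorm ℝ Y, (∀ y : Y, q y = regExt p i y) ∧ IsRegularSeminorm q ∧
      (∀ x : X, 0 ≤ x → q (i x) ≤ p x) ∧
      (∀ q' : Seminorm ℝ Y, IsRegularSeminorm q' → (∀ x : X, 0 ≤ x → q' (i x) ≤ p x) →
        ∀ y : Y, q' y ≤ q y) := by
  classical
  set S : Y → Set X := fun y => {x : X | -(i x) ≤ y ∧ y ≤ i x} with hSdef
  have hr : ∀ y : Y, regExt p i y = sInf (p '' S y) := fun y => rfl
  -- monotonicity of i
  have hi_mono : ∀ {a b : X}, a ≤ b → i a ≤ i b := by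
    intro a b hab
    have h0 : (0 : X) ≤ b - a := sub_nonneg.mpr hab
    have h1 := (hbi (b - a)).mp h0
    rw [map_sub] at h1
    exact sub_nonneg.mp h1
  -- nonemptiness of S y
  have hSne : ∀ y : Y, (S y).Nonempty := by
    intro y
    obtain ⟨a, ha⟩ := hmaj y
    obtain ⟨b, hb⟩ := hmaj (-y)
    obtain ⟨c, hac, hbc⟩ := exists_ge_ge a b
    refine ⟨c, ?_, le_trans ha (hi_mono hac)⟩
    have : -y ≤ i c := le_trans hb (hi_mono hbc)
    exact neg_le.mp this
  have himgne : ∀ y : Y, (p '' S y).Nonempty := fun y => (hSne y).image p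
  have hbdd : ∀ y : Y, BddBelow (p '' S y) := by
    rintro y
    refine ⟨0, ?_⟩
    rintro r ⟨x, -, rfl⟩
    exact apply_nonneg p x
  have hr_le : ∀ {y : Y} {x : X}, x ∈ S y → regExt p i y ≤ p x := by
    intro y x hx
    rw [hr]
    exact csInf_le (hbdd y) ⟨x, hx, rfl⟩
  have hle_r : ∀ {y : Y} {c : ℝ}, (∀ x ∈ S y, c ≤ p x) → c ≤ regExt p i y := by
    intro y c h
    rw [hr]
    exact le_csInf (himgne y) (by rintro r ⟨x, hx, rfl⟩; exact h x hx)
  have hr_nonneg : ∀ y : Y, 0 ≤ regExt p i y :=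
    fun y => hle_r (fun x _ => apply_nonneg p x)
  have hr_zero : regExt p i 0 = 0 := by
    refine le_antisymm ?_ (hr_nonneg 0)
    have h0 : (0 : X) ∈ S 0 := by
      constructor <;> simp [hSdef]
    have := hr_le h0
    simpa using this
  -- subadditivity
  have hr_add : ∀ y z : Y, regExt p i (y + z) ≤ regExt p i y + regExt p i z := by
    intro y z
    have key : ∀ x ∈ S y, ∀ x' ∈ S z, regExt p i (y + z) ≤ p x + p x' := by
      intro x hx x' hx'
      have hmem : x + x' ∈ S (y + z) := by
        constructor
        · rw [map_add, neg_add]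
          exact add_le_add hx.1 hx'.1
        · rw [map_add]
          exact add_le_add hx.2 hx'.2
      exact le_trans (hr_le hmem) (map_add_le_add p x x')
    have step : ∀ x ∈ S y, regExt p i (y + z) - regExt p i z ≤ p x := by
      intro x hx
      have h2 : regExt p i (y + z) - p x ≤ regExt p i z :=
        hle_r (fun x' hx' => by linarith [key x hx x' hx'])
      linarith
    have := hle_r step
    linarith
  -- symmetry
  have hS_neg : ∀ y : Y, S (-y) = S y := by
    intro y
    ext x
    constructor
    · rintro ⟨h1, h2⟩
      exact ⟨neg_le.mp h2, neg_le_neg_iff.mp h1⟩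
    · rintro ⟨h1, h2⟩
      exact ⟨neg_le_neg_iff.mpr h2, neg_le.mp h1⟩
  have hr_neg : ∀ y : Y, regExt p i (-y) = regExt p i y := by
    intro y; rw [hr, hr, hS_neg]
  -- scaling
  have hr_smul_le_pos : ∀ (c : ℝ), 0 < c → ∀ y : Y, regExt p i (c • y) ≤ c * regExt p i y := by
    intro c hc y
    have key : ∀ x ∈ S y, regExt p i (c • y) ≤ c * p x := by
      intro x hx
      have hmem : c • x ∈ S (c • y) := by
        constructor
        · have := smul_le_smul_of_nonneg_left hx.1 hc.le
          simpa [smul_neg] using this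
        · have := smul_le_smul_of_nonneg_left hx.2 hc.le
          simpa using this
      have := hr_le hmem
      rwa [map_smul_eq_mul, Real.norm_eq_abs, abs_of_pos hc] at this
    have h2 : c⁻¹ * regExt p i (c • y) ≤ regExt p i y := by
      refine hle_r (fun x hx => ?_)
      have := key x hx
      rw [inv_mul_le_iff₀ hc]
      linarith [key x hx]
    calc regExt p i (c • y) = c * (c⁻¹ * regExt p i (c • y)) := by
          field_simp
      _ ≤ c * regExt p i y := by
          exact mul_le_mul_of_nonneg_left h2 hc.le
  have hr_smul_le : ∀ (a : ℝ) (y : Y), regExt p i (a • y) ≤ |a| * regExt p i y := by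
    intro a y
    rcases lt_trichotomy a 0 with ha | rfl | ha
    · have h1 : a • y = (-a) • (-y) := by simp
      rw [h1, abs_of_neg ha]
      calc regExt p i ((-a) • (-y)) ≤ (-a) * regExt p i (-y) :=
            hr_smul_le_pos (-a) (by linarith) (-y)
        _ = -a * regExt p i y := by rw [hr_neg]
    · simp [hr_zero]
    · rw [abs_of_pos ha]; exact hr_smul_le_pos a ha y
  have hr_smul : ∀ (a : ℝ) (y : Y), regExt p i (a • y) = |a| * regExt p i y := by
    intro a y
    rcases eq_or_ne a 0 with rfl | ha
    · simp [hr_zero]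
    · refine le_antisymm (hr_smul_le a y) ?_
      have h1 := hr_smul_le a⁻¹ (a • y)
      rw [inv_smul_smul₀ ha, abs_inv] at h1
      have habs : (0 : ℝ) < |a| := abs_pos.mpr ha
      calc |a| * regExt p i y ≤ |a| * (|a|⁻¹ * regExt p i (a • y)) :=
            mul_le_mul_of_nonneg_left h1 habs.le
        _ = regExt p i (a • y) := by field_simp
  -- build the seminorm
  refine ⟨Seminorm.of (regExt p i) hr_add
    (fun a y => by rw [hr_smul, Real.norm_eq_abs]), fun y => rfl, ?_, ?_, ?_⟩
  · -- regularity
    intro y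
    show regExt p i y = sInf ((regExt p i) '' {z : Y | -z ≤ y ∧ y ≤ z})
    have hUbdd : BddBelow ((regExt p i) '' {z : Y | -z ≤ y ∧ y ≤ z}) := by
      refine ⟨0, ?_⟩
      rintro r ⟨z, -, rfl⟩
      exact hr_nonneg z
    obtain ⟨x₀, hx₀⟩ := hSne y
    have hUne : ((regExt p i) '' {z : Y | -z ≤ y ∧ y ≤ z}).Nonempty :=
      ⟨regExt p i (i x₀), ⟨i x₀, ⟨hx₀.1, hx₀.2⟩, rfl⟩⟩
    refine le_antisymm ?_ ?_
    · refine le_csInf hUne ?_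
      rintro r ⟨z, hz, rfl⟩
      -- S z ⊆ S y
      refine hle_r (fun x hx => ?_)
      have hmem : x ∈ S y := ⟨le_trans (neg_le_neg_iff.mpr hx.2) hz.1, le_trans hz.2 hx.2⟩
      exact hr_le hmem
    · refine hle_r (fun x hx => ?_)
      have h1 : regExt p i (i x) ≤ p x := by
        refine hr_le ⟨?_, le_refl _⟩
        exact le_trans hx.1 hx.2
      have h2 : sInf ((regExt p i) '' {z : Y | -z ≤ y ∧ y ≤ z}) ≤ regExt p i (i x) :=
        csInf_le hUbdd ⟨i x, ⟨hx.1, hx.2⟩, rfl⟩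
      linarith
  · -- bound on positive cone
    intro x hx
    show regExt p i (i x) ≤ p x
    have h0 : (0 : Y) ≤ i x := (hbi x).mp hx
    have hneg : -(i x) ≤ 0 := by simpa using neg_le_neg_iff.mpr h0
    exact hr_le ⟨le_trans hneg h0, le_refl _⟩
  · -- maximality
    intro q' hq'reg hq'le y
    show q' y ≤ regExt p i y
    refine hle_r (fun x hx => ?_)
    have hxpos : (0 : X) ≤ x := by
      rw [hbi]
      have h2 : -(i x) ≤ i x := le_trans hx.1 hx.2
      have h3 : (0 : Y) ≤ i x + i x := by
        have := add_le_add_right h2 (i x)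
        simpa using this
      have h4 := smul_le_smul_of_nonneg_left h3 (by norm_num : (0:ℝ) ≤ 2⁻¹)
      rw [smul_zero] at h4
      have h5 : (2:ℝ)⁻¹ • (i x + i x) = i x := by
        rw [← two_smul ℝ (i x), ← smul_assoc]
        norm_num
      rwa [h5] at h4
    have hq'bdd : BddBelow (q' '' {z : Y | -z ≤ y ∧ y ≤ z}) := by
      refine ⟨0, ?_⟩
      rintro r ⟨z, -, rfl⟩
      exact apply_nonneg q' z
    calc q' y = sInf (q' '' {z : Y | -z ≤ y ∧ y ≤ z}) := hq'reg y
      _ ≤ q' (i x) := csInf_le hq'bdd ⟨i x, ⟨hx.1, hx.2⟩, rfl⟩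
      _ ≤ p x := hq'le x hxpos
end

section
/- With the setting of the regular extension seminorm p_r(y) = inf{p(x) : x ∈ X, -i(x) ≤ y ≤ i(x)}: p_r agrees with p on the positive cone of X if and only if p is monotone; moreover, if p is monotone then p_r ≥ (1/2)p on X. -/
open Set Filter

/-- `p_r` agrees with `p` on the positive cone of `X` iff `p` is monotone;
moreover if `p` is monotone then `p_r ≥ (1/2) p` on `X`. -/
theorem statement2 {X Y : Type*}
    [AddCommGroup X] [PartialOrder X] [CovariantClass X X (· + ·) (· ≤ ·)]
    [Module ℝ X] [PosSMulMono ℝ X] [IsDirected X (· ≤ ·)]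
    [AddCommGroup Y] [PartialOrder Y] [CovariantClass Y Y (· + ·) (· ≤ ·)]
    [Module ℝ Y] [PosSMulMono ℝ Y] [IsDirected Y (· ≤ ·)]
    (p : Seminorm ℝ X) (i : X →ₗ[ℝ] Y)
    (hbi : IsBipositive i) (hmaj : MajorizingRange i) :
    ((∀ x : X, 0 ≤ x → regExt p i (i x) = p x) ↔ IsMonotoneSeminorm p) ∧
      (IsMonotoneSeminorm p → ∀ x : X, (1 / 2 : ℝ) * p x ≤ regExt p i (i x)) := by
  -- Reduce the defining set of `regExt` to a set inside `X`.
  have hle : ∀ a b : X, i a ≤ i b ↔ a ≤ b := by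
    intro a b
    rw [← sub_nonneg, ← map_sub, ← (hbi (b - a)), sub_nonneg]
  have hset : ∀ x : X,
      {x' : X | -(i x') ≤ i x ∧ i x ≤ i x'} = {x' : X | -x' ≤ x ∧ x ≤ x'} := by
    intro x
    ext x'
    have h1 : -(i x') ≤ i x ↔ -x' ≤ x := by
      rw [← map_neg]; exact hle (-x') x
    simp only [Set.mem_setOf_eq, h1, hle]
  have hregExt : ∀ x : X, regExt p i (i x) = sInf (p '' {x' : X | -x' ≤ x ∧ x ≤ x'}) := by
    intro x
    rw [regExt, hset]
  have hbdd : ∀ x : X, BddBelow (p '' {x' : X | -x' ≤ x ∧ x ≤ x'}) := by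
    intro x
    exact ⟨0, fun r ⟨x', _, hx'⟩ => hx' ▸ apply_nonneg p x'⟩
  have hne : ∀ x : X, (p '' {x' : X | -x' ≤ x ∧ x ≤ x'}).Nonempty := by
    intro x
    obtain ⟨x', h1, h2⟩ := directed_of (· ≤ ·) (-x) x
    exact ⟨p x', ⟨x', ⟨neg_le.mp h1, h2⟩, rfl⟩⟩
  constructor
  · constructor
    · -- agreement on positive cone implies monotone
      intro h x y hx hxy
      have hy : 0 ≤ y := le_trans hx hxy
      have := h x hx
      rw [hregExt] at this
      rw [← this]
      exact csInf_le (hbdd x) ⟨y, ⟨le_trans (neg_nonpos.mpr hy) hx, hxy⟩, rfl⟩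
    · -- monotone implies agreement on positive cone
      intro hm x hx
      rw [hregExt]
      apply le_antisymm
      · exact csInf_le (hbdd x) ⟨x, ⟨le_trans (neg_nonpos.mpr hx) hx, le_refl x⟩, rfl⟩
      · apply le_csInf (hne x)
        rintro r ⟨x', ⟨_, h2⟩, rfl⟩
        exact hm x x' hx h2
  · -- half estimate
    intro hm x
    rw [hregExt]
    apply le_csInf (hne x)
    rintro r ⟨x', ⟨h1, h2⟩, rfl⟩
    have hxp : 0 ≤ x + x' := by rw [← neg_le_iff_add_nonneg']; exact neg_le.mp h1
    have hxm : 0 ≤ x' - x := sub_nonneg.mpr h2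
    have hb1 : x + x' ≤ x' + x' := add_le_add_left h2 x'
    have hb2 : x' - x ≤ x' + x' := by
      have := add_le_add_right (neg_le.mpr h1) x'
      simpa [sub_eq_add_neg, add_comm] using this
    have hp1 : p (x + x') ≤ p x' + p x' :=
      le_trans (hm _ _ hxp hb1) (map_add_le_add p x' x')
    have hp2 : p (x' - x) ≤ p x' + p x' :=
      le_trans (hm _ _ hxm hb2) (map_add_le_add p x' x')
    have h2x : (2 : ℝ) * p x = p ((2 : ℝ) • x) := by
      rw [map_smul_eq_mul]; norm_num
    have hsum : (2 : ℝ) • x = (x + x') + (x - x') := by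
      rw [two_smul]; abel
    have hkey : (2 : ℝ) * p x ≤ p (x + x') + p (x' - x) := by
      rw [h2x, hsum]
      calc p ((x + x') + (x - x')) ≤ p (x + x') + p (x - x') := map_add_le_add p _ _
        _ = p (x + x') + p (x' - x) := by rw [map_sub_rev]
    linarith
end

section
/- An Archimedean pre-Riesz space X with Riesz completion (X^ρ, i) is pervasive if and only if for every y ∈ X^ρ with y > 0 one has y = sup{x ∈ i(X) : 0 < x ≤ y}. -/
open Set Filter

/-- an Archimedean pre-Riesz space `X` with Riesz completion `(Y, i)` is
pervasive iff every `0 < y` in `Y` is the supremum of `{x ∈ i(X) : 0 < x ≤ y}`. -/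
theorem statement6 {X Y : Type*}
    [AddCommGroup X] [PartialOrder X] [CovariantClass X X (· + ·) (· ≤ ·)]
    [Module ℝ X] [PosSMulMono ℝ X]
    [AddCommGroup Y] [Lattice Y] [CovariantClass Y Y (· + ·) (· ≤ ·)]
    [Module ℝ Y] [PosSMulMono ℝ Y]
    (hpre : IsPreRiesz X) (harch : ArchimedeanOrder' X)
    (i : X →ₗ[ℝ] Y) (hbi : IsBipositive i) (hod : OrderDenseRange i) :
    Pervasive i ↔
      ∀ y : Y, 0 < y → IsLUB {z : Y | z ∈ Set.range i ∧ 0 < z ∧ z ≤ y} y := by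
  constructor
  · intro hperv y hy
    set S : Set Y := {z : Y | z ∈ Set.range i ∧ 0 < z ∧ z ≤ y} with hS
    constructor
    · intro z hz; exact hz.2.2
    · rintro u hu
      by_contra hyu
      -- S is nonempty
      obtain ⟨x₁, hx₁pos, hx₁le⟩ := hperv y hy
      have hx₁S : i x₁ ∈ S := ⟨⟨x₁, rfl⟩, hx₁pos, hx₁le⟩
      have hx₁u : i x₁ ≤ u := hu hx₁S
      have hyu_pos : 0 < y ⊓ u := lt_of_lt_of_le hx₁pos (le_inf hx₁le hx₁u)
      have hinf_lt : y ⊓ u < y := lt_of_le_of_ne inf_le_left (fun h => hyu (inf_eq_left.1 h))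
      have hd : (0 : Y) < y - y ⊓ u := sub_pos.2 hinf_lt
      obtain ⟨x, hxpos, hxle⟩ := hperv _ hd
      -- all positive multiples of i x are in S
      have key : ∀ n : ℕ, (n + 1) • (i x) ∈ S ∧ (n + 1) • (i x) ≤ y ⊓ u := by
        intro n
        induction n with
        | zero =>
          have hle : i x ≤ y := by
            calc i x ≤ y - y ⊓ u := hxle
            _ ≤ y := sub_le_self _ hyu_pos.le
          have hmem : i x ∈ S := ⟨⟨x, rfl⟩, hxpos, hle⟩
          refine ⟨by simpa using hmem, ?_⟩
          simpa using le_inf hle (hu hmem)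
        | succ n ih =>
          obtain ⟨_, hle⟩ := ih
          have hle2 : (n + 1 + 1) • (i x) ≤ y := by
            have : (n + 1 + 1) • (i x) = (n + 1) • (i x) + i x := by
              rw [add_smul, one_smul]
            rw [this]
            calc (n + 1) • (i x) + i x ≤ y ⊓ u + (y - y ⊓ u) :=
              add_le_add hle hxle
            _ = y := by abel
          have hpos : (0 : Y) < (n + 1 + 1) • (i x) := by
            have : (0:ℕ) < n + 1 + 1 := by omega
            exact nsmul_pos hxpos (by omega)
          have hmem : (n + 1 + 1) • (i x) ∈ S := by
            refine ⟨⟨(n + 1 + 1) • x, ?_⟩, hpos, hle2⟩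
            simp [map_nsmul]
          exact ⟨hmem, le_inf hle2 (hu hmem)⟩
      -- transfer to X and use Archimedean
      have hrange : {z : Y | z ∈ Set.range i ∧ u ≤ z}.Nonempty := by
        by_contra hne
        have h0 := hod u
        rw [Set.not_nonempty_iff_eq_empty.1 hne] at h0
        have : u + u ≤ u := h0.2 (by intro z _; trivial)
        have hu0 : u ≤ 0 := add_le_iff_nonpos_left.1 this
        exact (lt_of_lt_of_le hyu_pos inf_le_right).not_ge hu0
      obtain ⟨_, ⟨x', rfl⟩, hux'⟩ := hrange
      have hnle : ∀ n : ℕ, n • x ≤ x' := by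
        intro n
        have h1 : n • (i x) ≤ i x' := by
          cases n with
          | zero => simpa using le_trans (le_trans hyu_pos.le inf_le_right) hux'
          | succ n => exact le_trans (le_trans (key n).2 inf_le_right) hux'
        have : (0 : Y) ≤ i (x' - n • x) := by
          rw [map_sub, map_nsmul]; simpa using h1
        exact sub_nonneg.1 ((hbi (x' - n • x)).2 this)
      have hx0 : x ≤ 0 := harch x x' hnle
      have : (0 : Y) ≤ i (-x) := (hbi (-x)).1 (by simpa using hx0)
      rw [map_neg] at this
      exact hxpos.not_ge (neg_nonneg.1 this)
  · intro h y hy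
    have hlub := h y hy
    have hne : {z : Y | z ∈ Set.range i ∧ 0 < z ∧ z ≤ y}.Nonempty := by
      by_contra hne
      rw [Set.not_nonempty_iff_eq_empty.1 hne] at hlub
      have : y ≤ 0 := hlub.2 (by intro z _; trivial)
      exact hy.not_ge this
    obtain ⟨_, ⟨x, rfl⟩, hpos, hle⟩ := hne
    exact ⟨x, hpos, hle⟩
end

section
/- Let X be a directed Archimedean partially ordered vector space with a regular norm ‖·‖ such that X⁺ is norm closed, and let (X^δ, i) be its Dedekind completion with ‖y‖_r = inf{‖x‖ : x ∈ X⁺, -i(x) ≤ y ≤ i(x)}. If (X, ‖·‖) is norm complete, then (X^δ, ‖·‖_r) is norm complete. -/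
open Set Filter

section Prelude

variable {E F : Type*}

/-- Archimedean property of a partially ordered group. -/
def ArchimedeanOrderPOVS (E : Type*) [AddCommGroup E] [PartialOrder E] : Prop :=
  ∀ x y : E, (∀ n : ℕ, n • x ≤ y) → x ≤ 0

end Prelude

/-- The regular extension norm on the Dedekind completion, taking positive
majorants from `X`. -/
noncomputable def drNorm {X Z : Type*} [Norm X] [AddCommGroup X] [PartialOrder X]
    [AddCommGroup Z] [PartialOrder Z] [Module ℝ X] [Module ℝ Z]
    (i : X →ₗ[ℝ] Z) (z : Z) : ℝ :=
  sInf {r : ℝ | ∃ x : X, 0 ≤ x ∧ -(i x) ≤ z ∧ z ≤ i x ∧ r = ‖x‖}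

section AuxHelpers

private lemma gneg_le_neg {G : Type*} [AddCommGroup G] [PartialOrder G]
    [CovariantClass G G (· + ·) (· ≤ ·)] {a b : G} (h : a ≤ b) : -b ≤ -a := by
  simpa using add_le_add_right h (-a + -b)

private lemma gsub_le_sub_left {G : Type*} [AddCommGroup G] [PartialOrder G]
    [CovariantClass G G (· + ·) (· ≤ ·)] {a b : G} (h : a ≤ b) (c : G) : c - b ≤ c - a := by
  simpa [sub_eq_add_neg] using add_le_add_right (gneg_le_neg h) c

private lemma gsub_le_sub_right {G : Type*} [AddCommGroup G] [PartialOrder G]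
    [CovariantClass G G (· + ·) (· ≤ ·)] {a b : G} (h : a ≤ b) (c : G) : a - c ≤ b - c := by
  simpa [sub_eq_add_neg] using add_le_add_right h (-c)

private lemma gneg_le_sub_of_le_add {G : Type*} [AddCommGroup G] [PartialOrder G]
    [CovariantClass G G (· + ·) (· ≤ ·)] {a b c : G} (h : c ≤ b + a) : -a ≤ b - c := by
  have h2 : c - b ≤ a := sub_le_iff_le_add'.mpr h
  have h3 := gneg_le_neg h2
  rwa [neg_sub] at h3

private lemma gsum_nonneg {G : Type*} [AddCommGroup G] [PartialOrder G]
    [CovariantClass G G (· + ·) (· ≤ ·)] {ι : Type*} (t : Finset ι) (f : ι → G)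
    (h : ∀ j ∈ t, 0 ≤ f j) : 0 ≤ ∑ j ∈ t, f j := by
  classical
  induction t using Finset.cons_induction with
  | empty => simp
  | cons a t ha ih =>
    rw [Finset.sum_cons]
    have h1 : 0 ≤ f a := h a (Finset.mem_cons_self a t)
    have h2 : 0 ≤ ∑ j ∈ t, f j := ih fun j hj => h j (Finset.mem_cons_of_mem hj)
    calc (0 : G) = 0 + 0 := by simp
      _ ≤ f a + ∑ j ∈ t, f j := add_le_add h1 h2

end AuxHelpers

section Aux

variable {X Z : Type*}
    [NormedAddCommGroup X] [NormedSpace ℝ X] [PartialOrder X]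
    [CovariantClass X X (· + ·) (· ≤ ·)]
    [AddCommGroup Z] [Lattice Z] [CovariantClass Z Z (· + ·) (· ≤ ·)]
    [Module ℝ Z]

private lemma aux_exists_majorant (i : X →ₗ[ℝ] Z) (hbi : IsBipositive i)
    (hod : OrderDenseRange i) (w : Z) : ∃ x : X, 0 ≤ x ∧ -(i x) ≤ w ∧ w ≤ i x := by
  set v : Z := (w ⊔ -w) ⊔ 0 with hv
  have hv0 : (0 : Z) ≤ v := le_sup_right
  have hvw : w ≤ v := le_trans le_sup_left le_sup_left
  have hvnw : -w ≤ v := le_trans le_sup_right le_sup_left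
  rcases Set.eq_empty_or_nonempty {z : Z | z ∈ Set.range i ∧ v ≤ z} with he | hne
  · have hglb := hod v
    rw [he] at hglb
    have htop : v + v ≤ v := hglb.2 fun c hc => absurd hc (Set.notMem_empty c)
    have hvle : v ≤ 0 := add_le_iff_nonpos_left.mp htop
    have hveq : v = 0 := le_antisymm hvle hv0
    refine ⟨0, le_refl 0, ?_, ?_⟩
    · have h1 : -w ≤ 0 := hveq ▸ hvnw
      have h2 : (0 : Z) ≤ w := by simpa using gneg_le_neg h1
      simpa using h2
    · have : w ≤ 0 := hveq ▸ hvw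
      simpa using this
  · obtain ⟨t, ⟨⟨x, rfl⟩, htv⟩⟩ := hne
    have hix : (0 : Z) ≤ i x := hv0.trans htv
    have hx0 : 0 ≤ x := (hbi x).mpr hix
    have hwx : w ≤ i x := hvw.trans htv
    have hnwx : -w ≤ i x := hvnw.trans htv
    have : -(i x) ≤ w := by simpa using gneg_le_neg hnwx
    exact ⟨x, hx0, this, hwx⟩

private lemma aux_drNorm_le (i : X →ₗ[ℝ] Z) {w : Z} {x : X}
    (hx0 : 0 ≤ x) (h1 : -(i x) ≤ w) (h2 : w ≤ i x) : drNorm i w ≤ ‖x‖ := by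
  unfold drNorm
  exact csInf_le ⟨0, by rintro r ⟨y, -, -, -, rfl⟩; exact norm_nonneg y⟩ ⟨x, hx0, h1, h2, rfl⟩

private lemma aux_drNorm_lt (i : X →ₗ[ℝ] Z) (hbi : IsBipositive i)
    (hod : OrderDenseRange i) {w : Z} {ε : ℝ} (h : drNorm i w < ε) :
    ∃ x : X, 0 ≤ x ∧ -(i x) ≤ w ∧ w ≤ i x ∧ ‖x‖ < ε := by
  unfold drNorm at h
  have hne : {r : ℝ | ∃ x : X, 0 ≤ x ∧ -(i x) ≤ w ∧ w ≤ i x ∧ r = ‖x‖}.Nonempty := by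
    obtain ⟨x, h1, h2, h3⟩ := aux_exists_majorant i hbi hod w
    exact ⟨‖x‖, x, h1, h2, h3, rfl⟩
  obtain ⟨r, ⟨x, h1, h2, h3, rfl⟩, hr⟩ := exists_lt_of_csInf_lt hne h
  exact ⟨x, h1, h2, h3, hr⟩

end Aux

/-- if a directed Archimedean partially ordered vector space `X` with
regular norm and norm closed positive cone is norm complete, then its Dedekind
completion `(X^δ, i)` is complete with respect to the regular extension norm `‖·‖_r`. -/
theorem statement10 {X Z : Type*}
    [NormedAddCommGroup X] [NormedSpace ℝ X] [PartialOrder X]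
    [CovariantClass X X (· + ·) (· ≤ ·)] [PosSMulMono ℝ X] [IsDirected X (· ≤ ·)]
    [AddCommGroup Z] [Lattice Z] [CovariantClass Z Z (· + ·) (· ≤ ·)]
    [Module ℝ Z] [PosSMulMono ℝ Z]
    (harch : ArchimedeanOrderPOVS X)
    (hreg : ∀ x : X, ‖x‖ = sInf {r : ℝ | ∃ y : X, -y ≤ x ∧ x ≤ y ∧ r = ‖y‖})
    (hclosed : IsClosed {x : X | 0 ≤ x})
    (i : X →ₗ[ℝ] Z) (hbi : IsBipositive i) (hod : OrderDenseRange i)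
    (hded : DedekindComplete Z)
    (hcomplete : CompleteSpace X) :
    ∀ f : ℕ → Z,
      (∀ ε : ℝ, 0 < ε → ∃ N : ℕ, ∀ m n : ℕ, N ≤ m → N ≤ n → drNorm i (f m - f n) < ε) →
      ∃ z : Z, ∀ ε : ℝ, 0 < ε → ∃ N : ℕ, ∀ n : ℕ, N ≤ n → drNorm i (f n - z) < ε := by
  intro f hC
  -- choose a rapidly Cauchy subsequence
  choose N hN using fun k : ℕ => hC ((1/2 : ℝ) ^ k) (by positivity)
  set φ : ℕ → ℕ := fun k => k + ∑ j ∈ Finset.range (k + 1), N j with hφdef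
  have hkφ : ∀ k, k ≤ φ k := fun k => Nat.le_add_right _ _
  have hφge : ∀ k, N k ≤ φ k := fun k =>
    le_trans (Finset.single_le_sum (fun j _ => Nat.zero_le _) (Finset.self_mem_range_succ k))
      (Nat.le_add_left _ _)
  have hφge1 : ∀ k, N k ≤ φ (k + 1) := fun k =>
    le_trans (Finset.single_le_sum (fun j _ => Nat.zero_le (N j))
      (Finset.mem_range.mpr (by omega))) (Nat.le_add_left _ _)
  have hb : ∀ k, drNorm i (f (φ (k + 1)) - f (φ k)) < (1/2 : ℝ) ^ k := fun k =>
    hN k (φ (k + 1)) (φ k) (hφge1 k) (hφge k)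
  choose x hx0 hxl hxu hxn using fun k => aux_drNorm_lt i hbi hod (hb k)
  -- summability of the tails
  have hgeo : Summable (fun n : ℕ => (1/2 : ℝ) ^ n) :=
    summable_geometric_of_lt_one (by norm_num) (by norm_num)
  have hsum : Summable x := Summable.of_norm_bounded hgeo fun k => (hxn k).le
  have hsumk : ∀ k, Summable (fun n => x (n + k)) := fun k => (summable_nat_add_iff k).mpr hsum
  set s : ℕ → X := fun k => ∑' n, x (n + k) with hsdef
  have hs_rec : ∀ k, s k = x k + s (k + 1) := by
    intro k
    have h1 := Summable.tsum_eq_zero_add (hsumk k)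
    have h2 : ∑' n : ℕ, x (n + 1 + k) = ∑' n : ℕ, x (n + (k + 1)) :=
      tsum_congr fun n => congrArg x (by omega)
    simpa [hsdef, h2] using h1
  have hs_nonneg : ∀ k, 0 ≤ s k := by
    intro k
    have hh := (hsumk k).hasSum.tendsto_sum_nat
    have hmem : ∀ m : ℕ, (∑ j ∈ Finset.range m, x (j + k)) ∈ {y : X | 0 ≤ y} := fun m =>
      Set.mem_setOf_eq ▸ gsum_nonneg _ _ fun j _ => hx0 (j + k)
    have : s k ∈ {y : X | 0 ≤ y} := hclosed.mem_of_tendsto hh (Filter.Eventually.of_forall hmem)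
    exact this
  have hs_norm : ∀ k, ‖s k‖ ≤ 2 * (1/2 : ℝ) ^ k := by
    intro k
    have h1 : ∀ n : ℕ, ‖x (n + k)‖ ≤ (1/2 : ℝ) ^ (n + k) := fun n => (hxn _).le
    have hg2 : Summable (fun n : ℕ => (1/2 : ℝ) ^ (n + k)) := by
      simpa [pow_add] using hgeo.mul_right ((1/2 : ℝ) ^ k)
    have hsn : Summable (fun n => ‖x (n + k)‖) :=
      Summable.of_nonneg_of_le (fun n => norm_nonneg _) h1 hg2
    calc ‖s k‖ ≤ ∑' n, ‖x (n + k)‖ := norm_tsum_le_tsum_norm hsn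
      _ ≤ ∑' n : ℕ, (1/2 : ℝ) ^ (n + k) := Summable.tsum_le_tsum h1 hsn hg2
      _ = (∑' n : ℕ, (1/2 : ℝ) ^ n) * (1/2 : ℝ) ^ k := by
          simp_rw [pow_add]; exact tsum_mul_right
      _ = 2 * (1/2 : ℝ) ^ k := by
          rw [tsum_geometric_of_lt_one (by norm_num) (by norm_num)]; norm_num
  have his : ∀ k, (0 : Z) ≤ i (s k) := fun k => (hbi _).mp (hs_nonneg k)
  -- the bracketing sequences
  set u : ℕ → Z := fun k => f (φ k) + i (s k) with hudef
  set l : ℕ → Z := fun k => f (φ k) - i (s k) with hldef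
  have hu_anti : ∀ k, u (k + 1) ≤ u k := by
    intro k
    have hfu : f (φ (k + 1)) ≤ f (φ k) + i (x k) := sub_le_iff_le_add'.mp (hxu k)
    calc u (k + 1) = f (φ (k + 1)) + i (s (k + 1)) := rfl
      _ ≤ (f (φ k) + i (x k)) + i (s (k + 1)) := add_le_add_left hfu _
      _ = f (φ k) + i (x k + s (k + 1)) := by rw [map_add, add_assoc]
      _ = u k := by rw [← hs_rec k]
  have hl_mono : ∀ k, l k ≤ l (k + 1) := by
    intro k
    have hfl : f (φ k) - i (x k) ≤ f (φ (k + 1)) := by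
      have h2 : -(i (x k)) ≤ f (φ (k + 1)) - f (φ k) := hxl k
      calc f (φ k) - i (x k) = f (φ k) + -(i (x k)) := by rw [sub_eq_add_neg]
        _ ≤ f (φ k) + (f (φ (k + 1)) - f (φ k)) := add_le_add_right h2 _
        _ = f (φ (k + 1)) := by abel
    calc l k = f (φ k) - (i (x k) + i (s (k + 1))) := by
          rw [hldef]; simp only []; rw [hs_rec k, map_add]
      _ = (f (φ k) - i (x k)) - i (s (k + 1)) := by rw [sub_sub]
      _ ≤ f (φ (k + 1)) - i (s (k + 1)) := gsub_le_sub_right hfl _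
      _ = l (k + 1) := rfl
  have humono := antitone_nat_of_succ_le hu_anti
  have hlmono := monotone_nat_of_le_succ hl_mono
  have hlu_self : ∀ m, l m ≤ u m := by
    intro m
    have h1 : -(i (s m)) ≤ i (s m) := le_trans (by simpa using gneg_le_neg (his m)) (his m)
    calc l m = f (φ m) + -(i (s m)) := by rw [hldef]; simp [sub_eq_add_neg]
      _ ≤ f (φ m) + i (s m) := add_le_add_right h1 _
      _ = u m := rfl
  have hlu : ∀ k m, l k ≤ u m := by
    intro k m
    rcases le_total k m with h | h
    · exact (hlmono h).trans (hlu_self m)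
    · exact (hlu_self k).trans (humono h)
  -- the candidate limit via Dedekind completeness
  obtain ⟨a, ha⟩ := hded (Set.range fun k => -(u k)) ⟨-(u 0), 0, rfl⟩
    ⟨-(l 0), by rintro _ ⟨k, rfl⟩; exact gneg_le_neg (hlu 0 k)⟩
  set z : Z := -a with hzdef
  have huz : ∀ k, z ≤ u k := by
    intro k
    have h1 : -(u k) ≤ a := ha.1 ⟨k, rfl⟩
    simpa [hzdef] using gneg_le_neg h1
  have hlz : ∀ k, l k ≤ z := by
    intro k
    have h1 : a ≤ -(l k) := ha.2 (by rintro _ ⟨m, rfl⟩; exact gneg_le_neg (hlu k m))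
    simpa [hzdef] using gneg_le_neg h1
  have hzb1 : ∀ k, f (φ k) - z ≤ i (s k) := fun k => sub_le_comm.mp (hlz k)
  have hzb2 : ∀ k, -(i (s k)) ≤ f (φ k) - z := fun k => gneg_le_sub_of_le_add (huz k)
  refine ⟨z, ?_⟩
  intro ε hε
  obtain ⟨N₀, hN₀⟩ := hC (ε/4) (by linarith)
  obtain ⟨k0, hk0⟩ := exists_pow_lt_of_lt_one (show (0:ℝ) < ε/4 by linarith)
    (show (1/2 : ℝ) < 1 by norm_num)
  set K := max N₀ k0 with hKdef
  refine ⟨N₀, fun n hn => ?_⟩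
  have hφK : N₀ ≤ φ K := le_trans (le_max_left _ _) (hkφ K)
  have h1 := hN₀ n (φ K) hn hφK
  obtain ⟨x', hx'0, hx'l, hx'u, hx'n⟩ := aux_drNorm_lt i hbi hod h1
  have hb1 : -(i (x' + s K)) ≤ f n - z := by
    rw [map_add, neg_add, ← sub_add_sub_cancel (f n) (f (φ K)) z]
    exact add_le_add hx'l (hzb2 K)
  have hb2 : f n - z ≤ i (x' + s K) := by
    rw [map_add, ← sub_add_sub_cancel (f n) (f (φ K)) z]
    exact add_le_add hx'u (hzb1 K)
  have hle : drNorm i (f n - z) ≤ ‖x' + s K‖ :=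
    aux_drNorm_le i (add_nonneg hx'0 (hs_nonneg K)) hb1 hb2
  have hKk0 : (1/2 : ℝ) ^ K ≤ (1/2) ^ k0 :=
    pow_le_pow_of_le_one (by norm_num) (by norm_num) (le_max_right _ _)
  have hsK := hs_norm K
  calc drNorm i (f n - z) ≤ ‖x'‖ + ‖s K‖ := hle.trans (norm_add_le _ _)
    _ < ε := by nlinarith
end

section
/- Let X be an Archimedean Riesz space with an order unit u equipped with the order unit norm ‖·‖_u. Then the norm dual X' is an AL-space. -/
open Set Filter

/-- The dual order on the norm dual of an ordered normed space. -/
def dLe {X : Type*} [NormedAddCommGroup X] [Lattice X] [HasSolidNorm X] [IsOrderedAddMonoid X] [NormedSpace ℝ X]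
    (f g : X →L[ℝ] ℝ) : Prop :=
  ∀ x : X, 0 ≤ x → f x ≤ g x


lemma real_smul_nonneg {X : Type*} [NormedAddCommGroup X] [Lattice X] [HasSolidNorm X] [IsOrderedAddMonoid X] [NormedSpace ℝ X]
    {c : ℝ} {x : X} (hc : 0 ≤ c) (hx : 0 ≤ x) : 0 ≤ c • x := by
  have hdy : ∀ m k : ℕ, 0 ≤ ((k : ℝ) / 2 ^ m) • x := by
    intro m
    induction m with
    | zero =>
      intro k
      have : ((k : ℝ) / 2 ^ 0) • x = k • x := by
        rw [pow_zero, div_one, Nat.cast_smul_eq_nsmul]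
      rw [this]
      exact nsmul_nonneg hx k
    | succ m ih =>
      intro k
      apply nsmul_two_semiclosed
      have : (2 : ℕ) • (((k : ℝ) / 2 ^ (m + 1)) • x) = ((k : ℝ) / 2 ^ m) • x := by
        rw [← Nat.cast_smul_eq_nsmul ℝ, smul_smul]
        congr 1
        push_cast
        field_simp
        ring
      rw [this]
      exact ih k
  have hcone : IsClosed {y : X | 0 ≤ y} := isClosed_le continuous_const continuous_id
  set s : ℕ → ℝ := fun n => (⌈c * 2 ^ n⌉₊ : ℝ) / 2 ^ n with hs
  have hlb : ∀ n, c ≤ s n := by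
    intro n
    rw [hs]
    have := Nat.le_ceil (c * 2 ^ n)
    rw [le_div_iff₀ (by positivity)]
    exact this
  have hub : ∀ n, s n ≤ c + (1 / 2) ^ n := by
    intro n
    have h1 : (⌈c * 2 ^ n⌉₊ : ℝ) < c * 2 ^ n + 1 :=
      Nat.ceil_lt_add_one (by positivity)
    rw [hs]
    rw [div_le_iff₀ (by positivity)]
    have : (c + (1 / 2) ^ n) * 2 ^ n = c * 2 ^ n + 1 := by
      rw [add_mul, ← mul_pow]; norm_num
    rw [this]
    exact h1.le
  have htends : Tendsto s atTop (nhds c) := by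
    have h1 : Tendsto (fun n : ℕ => c + (1 / 2 : ℝ) ^ n) atTop (nhds (c + 0)) :=
      tendsto_const_nhds.add (tendsto_pow_atTop_nhds_zero_of_lt_one (by norm_num) (by norm_num))
    rw [add_zero] at h1
    exact tendsto_of_tendsto_of_tendsto_of_le_of_le tendsto_const_nhds h1 hlb hub
  have htends2 : Tendsto (fun n => s n • x) atTop (nhds (c • x)) := htends.smul_const x
  refine hcone.mem_of_tendsto htends2 (Eventually.of_forall fun n => ?_)
  exact hdy n ⌈c * 2 ^ n⌉₊


section RK

variable {X : Type*} [NormedAddCommGroup X] [Lattice X] [HasSolidNorm X] [IsOrderedAddMonoid X] [NormedSpace ℝ X]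

lemma myNormMono {x y : X} (h0 : 0 ≤ y) (h : y ≤ x) : ‖y‖ ≤ ‖x‖ :=
  norm_le_norm_of_abs_le_abs (by rwa [abs_of_nonneg h0, abs_of_nonneg (h0.trans h)])

variable (f g : X →L[ℝ] ℝ)

/-- The set whose sup defines the Riesz–Kantorovich supremum on the positive cone. -/
def rkSet (x : X) : Set ℝ := {r : ℝ | ∃ y : X, 0 ≤ y ∧ y ≤ x ∧ r = f y + g (x - y)}

noncomputable def rkFun (x : X) : ℝ := sSup (rkSet f g x)

lemma rkSet_nonempty {x : X} (hx : 0 ≤ x) : (rkSet f g x).Nonempty :=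
  ⟨f 0 + g (x - 0), 0, le_refl 0, hx, rfl⟩

lemma rkSet_bdd {x : X} (hx : 0 ≤ x) : ∀ r ∈ rkSet f g x, r ≤ (‖f‖ + ‖g‖) * ‖x‖ := by
  rintro r ⟨y, h0, h1, rfl⟩
  have h2 : ‖y‖ ≤ ‖x‖ := myNormMono h0 h1
  have h3 : ‖x - y‖ ≤ ‖x‖ := myNormMono (sub_nonneg.mpr h1) (by simpa using h0)
  have b1 : f y ≤ ‖f‖ * ‖x‖ := by
    calc f y ≤ |f y| := le_abs_self _
    _ = ‖f y‖ := (Real.norm_eq_abs _).symm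
    _ ≤ ‖f‖ * ‖y‖ := f.le_opNorm y
    _ ≤ ‖f‖ * ‖x‖ := by gcongr
  have b2 : g (x - y) ≤ ‖g‖ * ‖x‖ := by
    calc g (x - y) ≤ |g (x - y)| := le_abs_self _
    _ = ‖g (x - y)‖ := (Real.norm_eq_abs _).symm
    _ ≤ ‖g‖ * ‖x - y‖ := g.le_opNorm _
    _ ≤ ‖g‖ * ‖x‖ := by gcongr
  linarith

lemma rkSet_bddAbove {x : X} (hx : 0 ≤ x) : BddAbove (rkSet f g x) :=
  ⟨(‖f‖ + ‖g‖) * ‖x‖, fun r hr => rkSet_bdd f g hx r hr⟩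

lemma rkFun_le {x : X} (hx : 0 ≤ x) : rkFun f g x ≤ (‖f‖ + ‖g‖) * ‖x‖ :=
  csSup_le (rkSet_nonempty f g hx) (rkSet_bdd f g hx)

lemma le_rkFun_left {x : X} (hx : 0 ≤ x) : f x ≤ rkFun f g x := by
  have : f x + g (x - x) ∈ rkSet f g x := ⟨x, hx, le_rfl, rfl⟩
  have h := le_csSup (rkSet_bddAbove f g hx) this
  simpa [rkFun] using h

lemma le_rkFun_right {x : X} (hx : 0 ≤ x) : g x ≤ rkFun f g x := by
  have : f 0 + g (x - 0) ∈ rkSet f g x := ⟨0, le_rfl, hx, rfl⟩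
  have h := le_csSup (rkSet_bddAbove f g hx) this
  simpa [rkFun] using h

lemma abs_rkFun_le {x : X} (hx : 0 ≤ x) : |rkFun f g x| ≤ (‖f‖ + ‖g‖) * ‖x‖ := by
  rw [abs_le]
  refine ⟨?_, rkFun_le f g hx⟩
  have h1 : g x ≤ rkFun f g x := le_rkFun_right f g hx
  have h2 : -(‖g‖ * ‖x‖) ≤ g x := by
    have := g.le_opNorm x
    rw [Real.norm_eq_abs, abs_le] at this
    exact neg_le_of_neg_le (by linarith [this.1])
  have h3 : (0:ℝ) ≤ ‖f‖ * ‖x‖ := by positivity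
  linarith

lemma rkFun_zero : rkFun f g 0 = 0 := by
  refine le_antisymm (csSup_le (rkSet_nonempty f g le_rfl) ?_) ?_
  · rintro r ⟨y, h0, h1, rfl⟩
    have : y = 0 := le_antisymm h1 h0
    simp [this]
  · have := le_rkFun_left f g (le_refl (0:X))
    simpa using this

lemma rkFun_add {a b : X} (ha : 0 ≤ a) (hb : 0 ≤ b) :
    rkFun f g (a + b) = rkFun f g a + rkFun f g b := by
  have hab : 0 ≤ a + b := add_nonneg ha hb
  apply le_antisymm
  · apply csSup_le (rkSet_nonempty f g hab)
    rintro r ⟨y, h0, h1, rfl⟩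
    set y₁ := y ⊓ a with hy₁
    set y₂ := y - y ⊓ a with hy₂
    have hy₁0 : 0 ≤ y₁ := le_inf h0 ha
    have hy₁a : y₁ ≤ a := inf_le_right
    have hy₂0 : 0 ≤ y₂ := sub_nonneg.mpr inf_le_left
    have hy₂b : y₂ ≤ b := by
      have h4 : y ⊓ a + y ⊔ a = y + a := inf_add_sup y a
      have h5 : y ⊔ a ≤ a + b := sup_le h1 (le_add_of_nonneg_right hb)
      have h6 : y + a ≤ y ⊓ a + (a + b) := by
        rw [← h4]; exact add_le_add_right h5 _
      have h7 : y ≤ y ⊓ a + b := by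
        have h8 := sub_le_sub_right h6 a
        rw [show y ⊓ a + (a + b) - a = y ⊓ a + b from by abel] at h8
        simpa using h8
      rw [hy₂, sub_le_iff_le_add, add_comm]
      exact h7
    have hsplit : y = y₁ + y₂ := by rw [hy₁, hy₂]; abel
    have hsplit2 : a + b - y = (a - y₁) + (b - y₂) := by rw [hsplit]; abel
    have key : f y + g (a + b - y) = (f y₁ + g (a - y₁)) + (f y₂ + g (b - y₂)) := by
      rw [hsplit2, map_add]
      nth_rewrite 1 [hsplit]
      rw [map_add]; ring
    rw [key]
    exact add_le_add (le_csSup (rkSet_bddAbove f g ha) ⟨y₁, hy₁0, hy₁a, rfl⟩)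
      (le_csSup (rkSet_bddAbove f g hb) ⟨y₂, hy₂0, hy₂b, rfl⟩)
  · have step : ∀ r₁ ∈ rkSet f g a, ∀ r₂ ∈ rkSet f g b, r₁ + r₂ ≤ rkFun f g (a + b) := by
      rintro r₁ ⟨y₁, h10, h11, rfl⟩ r₂ ⟨y₂, h20, h21, rfl⟩
      have hmem : f (y₁ + y₂) + g (a + b - (y₁ + y₂)) ∈ rkSet f g (a + b) :=
        ⟨y₁ + y₂, add_nonneg h10 h20, add_le_add h11 h21, rfl⟩
      have h := le_csSup (rkSet_bddAbove f g hab) hmem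
      have heq : f (y₁ + y₂) + g (a + b - (y₁ + y₂)) =
          (f y₁ + g (a - y₁)) + (f y₂ + g (b - y₂)) := by
        have : a + b - (y₁ + y₂) = (a - y₁) + (b - y₂) := by abel
        rw [this, map_add, map_add]; ring
      rw [rkFun]
      linarith [heq ▸ h]
    have h1 : ∀ r₁ ∈ rkSet f g a, sSup (rkSet f g b) ≤ rkFun f g (a + b) - r₁ :=
      fun r₁ hr₁ => csSup_le (rkSet_nonempty f g hb)
        (fun r₂ hr₂ => by linarith [step r₁ hr₁ r₂ hr₂])
    have h2 : sSup (rkSet f g a) ≤ rkFun f g (a + b) - sSup (rkSet f g b) :=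
      csSup_le (rkSet_nonempty f g ha) (fun r₁ hr₁ => by linarith [h1 r₁ hr₁])
    have : rkFun f g a = sSup (rkSet f g a) := rfl
    have hbb : rkFun f g b = sSup (rkSet f g b) := rfl
    linarith [h2]

/-- The extension of `rkFun` to all of `X`. -/
noncomputable def rkExt (x : X) : ℝ := rkFun f g x⁺ - rkFun f g x⁻

lemma rkExt_eq_sub {a b : X} (ha : 0 ≤ a) (hb : 0 ≤ b) :
    rkExt f g (a - b) = rkFun f g a - rkFun f g b := by
  have h0 := posPart_sub_negPart (a - b)
  have h : (a - b)⁺ + b = (a - b)⁻ + a := by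
    rw [← sub_eq_zero]
    rw [show (a - b)⁺ + b - ((a - b)⁻ + a) = ((a - b)⁺ - (a - b)⁻) - (a - b) from by abel,
      h0, sub_self]
  have e1 : rkFun f g ((a - b)⁺ + b) = rkFun f g ((a - b)⁺) + rkFun f g b :=
    rkFun_add f g (posPart_nonneg _) hb
  have e2 : rkFun f g ((a - b)⁻ + a) = rkFun f g ((a - b)⁻) + rkFun f g a :=
    rkFun_add f g (negPart_nonneg _) ha
  have e3 : rkFun f g ((a - b)⁺ + b) = rkFun f g ((a - b)⁻ + a) := by rw [h]
  rw [rkExt]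
  linarith [e1, e2, e3]

lemma rkExt_add (x y : X) : rkExt f g (x + y) = rkExt f g x + rkExt f g y := by
  have h1 : x + y = (x⁺ + y⁺) - (x⁻ + y⁻) := by
    rw [show (x⁺ + y⁺) - (x⁻ + y⁻) = (x⁺ - x⁻) + (y⁺ - y⁻) from by abel,
      posPart_sub_negPart, posPart_sub_negPart]
  rw [h1, rkExt_eq_sub f g (add_nonneg (posPart_nonneg _) (posPart_nonneg _))
      (add_nonneg (negPart_nonneg _) (negPart_nonneg _)),
    rkFun_add f g (posPart_nonneg _) (posPart_nonneg _),
    rkFun_add f g (negPart_nonneg _) (negPart_nonneg _), rkExt, rkExt]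
  ring

lemma rkExt_of_nonneg {x : X} (hx : 0 ≤ x) : rkExt f g x = rkFun f g x := by
  rw [rkExt, posPart_eq_self.mpr hx, negPart_eq_zero.mpr hx, rkFun_zero, sub_zero]

lemma abs_rkExt_le (x : X) : |rkExt f g x| ≤ (2 * (‖f‖ + ‖g‖)) * ‖x‖ := by
  have hp : ‖x⁺‖ ≤ ‖x‖ := by
    have h1 : x⁺ ≤ |x| := by
      rw [← posPart_add_negPart x]; exact le_add_of_nonneg_right (negPart_nonneg x)
    calc ‖x⁺‖ ≤ ‖|x|‖ := myNormMono (posPart_nonneg x) h1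
    _ = ‖x‖ := norm_abs_eq_norm x
  have hn : ‖x⁻‖ ≤ ‖x‖ := by
    have h1 : x⁻ ≤ |x| := by
      rw [← posPart_add_negPart x]; exact le_add_of_nonneg_left (posPart_nonneg x)
    calc ‖x⁻‖ ≤ ‖|x|‖ := myNormMono (negPart_nonneg x) h1
    _ = ‖x‖ := norm_abs_eq_norm x
  have b1 := abs_rkFun_le f g (posPart_nonneg x)
  have b2 := abs_rkFun_le f g (negPart_nonneg x)
  have hC : (0:ℝ) ≤ ‖f‖ + ‖g‖ := by positivity
  have := abs_sub (rkFun f g x⁺) (rkFun f g x⁻)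
  rw [rkExt]
  calc |rkFun f g x⁺ - rkFun f g x⁻| ≤ |rkFun f g x⁺| + |rkFun f g x⁻| := abs_sub _ _
  _ ≤ (‖f‖ + ‖g‖) * ‖x⁺‖ + (‖f‖ + ‖g‖) * ‖x⁻‖ := add_le_add b1 b2
  _ ≤ (‖f‖ + ‖g‖) * ‖x‖ + (‖f‖ + ‖g‖) * ‖x‖ := by gcongr
  _ = (2 * (‖f‖ + ‖g‖)) * ‖x‖ := by ring

/-- `rkExt` as an additive monoid hom. -/
noncomputable def rkHom : X →+ ℝ := AddMonoidHom.mk' (rkExt f g) (rkExt_add f g)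

lemma rkHom_continuous : Continuous (rkHom f g) := by
  have hlip : LipschitzWith (Real.toNNReal (2 * (‖f‖ + ‖g‖))) (rkHom f g) := by
    apply LipschitzWith.of_dist_le' (K := 2 * (‖f‖ + ‖g‖))
    intro x y
    rw [Real.dist_eq, ← map_sub (rkHom f g), dist_eq_norm]
    exact abs_rkExt_le f g (x - y)
  exact hlip.continuous

/-- The Riesz–Kantorovich supremum as a continuous linear map. -/
noncomputable def rkCLM : X →L[ℝ] ℝ :=
  (rkHom f g).toRealLinearMap (rkHom_continuous f g)

lemma rkCLM_apply (x : X) : rkCLM f g x = rkExt f g x := by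
  have := AddMonoidHom.coe_toRealLinearMap (rkHom f g) (rkHom_continuous f g)
  rw [rkCLM]
  exact congrFun this x

end RK

section Norm

variable {X : Type*} [NormedAddCommGroup X] [Lattice X] [HasSolidNorm X] [IsOrderedAddMonoid X] [NormedSpace ℝ X]

lemma opNorm_eq_of_pos (u : X) (hu : IsOrderUnit u)
    (hnorm : ∀ x : X, ‖x‖ = unitNorm u x) (f : X →L[ℝ] ℝ) (hf : dLe 0 f) :
    ‖f‖ = f u := by
  have hf' : ∀ x : X, 0 ≤ x → 0 ≤ f x := by
    intro x hx
    simpa using hf x hx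
  have hu0 : 0 ≤ u := by
    obtain ⟨l, hl, h⟩ := hu 0
    have h1 : (0:X) ≤ l • u := by simpa using h
    have h2 : (0:X) ≤ l⁻¹ • (l • u) := real_smul_nonneg (inv_nonneg.mpr hl.le) h1
    rwa [smul_smul, inv_mul_cancel₀ hl.ne', one_smul] at h2
  have hfu : 0 ≤ f u := hf' u hu0
  have hu1 : ‖u‖ ≤ 1 := by
    rw [hnorm u, unitNorm]
    apply csInf_le ⟨0, fun r hr => hr.1.le⟩
    refine ⟨one_pos, ?_, by rw [one_smul]⟩
    rw [one_smul]
    exact neg_nonpos_of_nonneg hu0 |>.trans hu0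
  have fmono : ∀ a b : X, a ≤ b → f a ≤ f b := by
    intro a b hab
    have := hf' (b - a) (sub_nonneg.mpr hab)
    rw [map_sub] at this
    linarith
  have key : ∀ x : X, |f x| ≤ f u * ‖x‖ := by
    intro x
    set S := {l : ℝ | 0 < l ∧ -(l • u) ≤ x ∧ x ≤ l • u} with hS
    have hne : S.Nonempty := by
      obtain ⟨l₁, hl₁, hx₁⟩ := hu x
      obtain ⟨l₂, hl₂, hx₂⟩ := hu (-x)
      refine ⟨l₁ + l₂, add_pos hl₁ hl₂, ?_, ?_⟩
      · rw [neg_le]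
        calc -x ≤ l₂ • u := hx₂
        _ ≤ (l₁ + l₂) • u := by
            rw [add_smul]
            exact le_add_of_nonneg_left (real_smul_nonneg hl₁.le hu0)
      · calc x ≤ l₁ • u := hx₁
        _ ≤ (l₁ + l₂) • u := by
            rw [add_smul]
            exact le_add_of_nonneg_right (real_smul_nonneg hl₂.le hu0)
    have bound : ∀ l ∈ S, |f x| ≤ l * f u := by
      rintro l ⟨hl, h1, h2⟩
      rw [abs_le]
      constructor
      · have := fmono _ _ h1
        rw [map_neg, map_smul, smul_eq_mul] at this
        linarith
      · have := fmono _ _ h2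
        rwa [map_smul, smul_eq_mul] at this
    have hnx : ‖x‖ = sInf S := by rw [hnorm x]; rfl
    rcases eq_or_lt_of_le hfu with hfu0 | hfu0
    · obtain ⟨l, hl⟩ := hne
      have h2 := bound l hl
      rw [← hfu0, mul_zero] at h2
      rw [← hfu0, zero_mul]
      exact h2
    · have hdiv : |f x| / f u ≤ sInf S :=
        le_csInf hne fun l hl => (div_le_iff₀ hfu0).mpr (by linarith [bound l hl])
      rw [hnx, mul_comm, ← div_le_iff₀ hfu0]
      exact hdiv
  apply le_antisymm
  · apply ContinuousLinearMap.opNorm_le_bound f hfu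
    intro x
    rw [Real.norm_eq_abs]
    exact key x
  · calc f u = |f u| := (abs_of_nonneg hfu).symm
    _ = ‖f u‖ := (Real.norm_eq_abs _).symm
    _ ≤ ‖f‖ * ‖u‖ := f.le_opNorm u
    _ ≤ ‖f‖ * 1 := by gcongr
    _ = ‖f‖ := mul_one _

end Norm

/-- the norm dual of an Archimedean Riesz space with order unit `u` and
the order unit norm is an AL-space: it is a lattice in the dual order, it is norm
complete, and the norm is additive on disjoint positive elements. -/
theorem statement12 {X : Type*} [NormedAddCommGroup X] [Lattice X] [HasSolidNorm X] [IsOrderedAddMonoid X] [NormedSpace ℝ X]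
    (harch : ArchimedeanOrder' X) (u : X) (hu : IsOrderUnit u)
    (hnorm : ∀ x : X, ‖x‖ = unitNorm u x) :
    -- the dual is a lattice in the dual order
    (∀ f g : X →L[ℝ] ℝ, ∃ h : X →L[ℝ] ℝ, dLe f h ∧ dLe g h ∧
      ∀ k : X →L[ℝ] ℝ, dLe f k → dLe g k → dLe h k) ∧
    -- the dual is norm complete
    CompleteSpace (X →L[ℝ] ℝ) ∧
    -- the AL-property: the norm is additive on disjoint positive functionals
    (∀ f g : X →L[ℝ] ℝ, dLe 0 f → dLe 0 g →
      (∀ h : X →L[ℝ] ℝ, dLe h f → dLe h g → dLe h 0) → ‖f + g‖ = ‖f‖ + ‖g‖) := by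
  refine ⟨?_, inferInstance, ?_⟩
  · intro f g
    refine ⟨rkCLM f g, ?_, ?_, ?_⟩
    · intro x hx
      rw [rkCLM_apply, rkExt_of_nonneg f g hx]
      exact le_rkFun_left f g hx
    · intro x hx
      rw [rkCLM_apply, rkExt_of_nonneg f g hx]
      exact le_rkFun_right f g hx
    · intro k hfk hgk x hx
      rw [rkCLM_apply, rkExt_of_nonneg f g hx]
      apply csSup_le (rkSet_nonempty f g hx)
      rintro r ⟨y, h0, h1, rfl⟩
      have h2 : f y ≤ k y := hfk y h0
      have h3 : g (x - y) ≤ k (x - y) := hgk (x - y) (sub_nonneg.mpr h1)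
      have h4 : k y + k (x - y) = k x := by rw [← map_add]; congr 1; abel
      linarith
  · intro f g hf hg _
    have hfg : dLe 0 (f + g) := by
      intro x hx
      have h1 := hf x hx
      have h2 := hg x hx
      simp only [ContinuousLinearMap.zero_apply] at h1 h2 ⊢
      simp only [ContinuousLinearMap.add_apply]
      linarith
    rw [opNorm_eq_of_pos u hu hnorm f hf, opNorm_eq_of_pos u hu hnorm g hg,
      opNorm_eq_of_pos u hu hnorm (f + g) hfg, ContinuousLinearMap.add_apply]
end

section
/- Let X, Y be normed pre-Riesz spaces with the norm on Y regular, S, T : X → Y with 0 ≤ S ≤ T, and (Y^ρ, i) the Riesz completion of Y equipped with the regular extension seminorm. If T maps a subset A of X⁺ to a norm totally bounded set in Y, then for each ε > 0 there exists u ∈ (Y^ρ)⁺ such that ‖(i(Sx) − u)⁺‖_{Y^ρ} ≤ ε for all x ∈ A. -/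
open Set Filter

/-- The regular extension of a norm along the embedding `i`. -/
noncomputable def regExtN {Y W : Type*} [Norm Y] [AddCommGroup Y] [PartialOrder Y]
    [AddCommGroup W] [PartialOrder W] [Module ℝ Y] [Module ℝ W]
    (i : Y →ₗ[ℝ] W) (w : W) : ℝ :=
  sInf {r : ℝ | ∃ z : Y, -(i z) ≤ w ∧ w ≤ i z ∧ r = ‖z‖}

/-- an approximation property in the Riesz completion `(Y^ρ, i)`:
if `T` maps `A ⊆ X⁺` to a norm totally bounded set, then for each `ε > 0` there is
`u ∈ (Y^ρ)⁺` with `‖(i (S x) - u)⁺‖ ≤ ε` for all `x ∈ A`. -/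
theorem statement15 {X Y W : Type*}
    [NormedAddCommGroup X] [NormedSpace ℝ X] [PartialOrder X]
    [CovariantClass X X (· + ·) (· ≤ ·)] [PosSMulMono ℝ X]
    [NormedAddCommGroup Y] [NormedSpace ℝ Y] [PartialOrder Y]
    [CovariantClass Y Y (· + ·) (· ≤ ·)] [PosSMulMono ℝ Y]
    [AddCommGroup W] [Lattice W] [CovariantClass W W (· + ·) (· ≤ ·)]
    [Module ℝ W] [PosSMulMono ℝ W]
    (hpreX : IsPreRiesz X) (hpreY : IsPreRiesz Y)
    (hregY : ∀ y : Y, ‖y‖ = sInf {r : ℝ | ∃ z : Y, -z ≤ y ∧ y ≤ z ∧ r = ‖z‖})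
    (i : Y →ₗ[ℝ] W) (hbi : IsBipositive i) (hod : OrderDenseRange i)
    (S T : X →ₗ[ℝ] Y)
    (hSpos : ∀ x : X, 0 ≤ x → 0 ≤ S x)
    (hST : ∀ x : X, 0 ≤ x → S x ≤ T x)
    (A : Set X) (hA : A ⊆ {x : X | 0 ≤ x})
    (hTA : TotallyBounded (T '' A)) :
    ∀ ε : ℝ, 0 < ε → ∃ u : W, 0 ≤ u ∧
      ∀ x ∈ A, regExtN i ((i (S x) - u) ⊔ 0) ≤ ε := by
  intro ε hε
  have imono : ∀ a b : Y, a ≤ b → i a ≤ i b := by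
    intro a b hab
    have h := (hbi (b - a)).mp (by simpa using sub_nonneg.mpr hab)
    rw [map_sub] at h
    exact sub_nonneg.mp h
  obtain ⟨t, htfin, hcov⟩ := Metric.totallyBounded_iff.mp hTA ε hε
  by_cases hAe : A = ∅
  · refine ⟨0, le_refl 0, ?_⟩
    intro x hx; rw [hAe] at hx; exact absurd hx (Set.notMem_empty x)
  have hAne : A.Nonempty := Set.nonempty_iff_ne_empty.mpr hAe
  have htne : htfin.toFinset.Nonempty := by
    obtain ⟨x, hx⟩ := hAne
    have hmem : T x ∈ ⋃ y ∈ t, Metric.ball y ε := hcov ⟨x, hx, rfl⟩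
    simp only [Set.mem_iUnion] at hmem
    obtain ⟨y, hy, _⟩ := hmem
    exact ⟨y, htfin.mem_toFinset.mpr hy⟩
  set u := htfin.toFinset.sup' htne (fun y => i y ⊔ 0) with hu
  have hupos : 0 ≤ u := by
    obtain ⟨y, hy⟩ := htne
    exact le_trans le_sup_right (Finset.le_sup' (fun y => i y ⊔ 0) hy)
  refine ⟨u, hupos, ?_⟩
  intro x hxA
  have hmem : T x ∈ ⋃ y ∈ t, Metric.ball y ε := hcov ⟨x, hxA, rfl⟩
  simp only [Set.mem_iUnion, Metric.mem_ball] at hmem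
  obtain ⟨y, hy, hdist⟩ := hmem
  have hdnorm : ‖T x - y‖ < ε := by rwa [dist_eq_norm] at hdist
  obtain ⟨z, hz1, hz2, hznorm⟩ : ∃ z : Y, -z ≤ T x - y ∧ T x - y ≤ z ∧ ‖z‖ < ε := by
    by_cases hd : T x - y = 0
    · exact ⟨0, by simp [hd], by simp [hd], by simpa using hε⟩
    · have hne : {r : ℝ | ∃ z : Y, -z ≤ T x - y ∧ T x - y ≤ z ∧ r = ‖z‖}.Nonempty := by
        by_contra h
        rw [Set.not_nonempty_iff_eq_empty] at h
        have heq := hregY (T x - y)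
        rw [h, Real.sInf_empty] at heq
        exact hd (norm_eq_zero.mp heq)
      rw [hregY (T x - y)] at hdnorm
      obtain ⟨r, ⟨z, h1, h2, hr⟩, hrε⟩ := exists_lt_of_csInf_lt hne hdnorm
      exact ⟨z, h1, h2, hr ▸ hrε⟩
  -- 0 ≤ z in Y, hence 0 ≤ i z
  have hzz : -z ≤ z := hz1.trans hz2
  have hz0 : (0 : Y) ≤ z := by
    have h2 : (0 : Y) ≤ z + z := by
      have := add_le_add_right hzz z
      simpa using this
    have h2' : (0 : Y) ≤ (2 : ℝ) • z := by rwa [two_smul]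
    have := smul_le_smul_of_nonneg_left h2' (by norm_num : (0:ℝ) ≤ (1/2 : ℝ))
    simpa [smul_smul] using this
  have hiz0 : (0 : W) ≤ i z := (hbi z).mp hz0
  -- i y ≤ u
  have hiyu : i y ≤ u := le_trans le_sup_left (Finset.le_sup' (fun y => i y ⊔ 0) (htfin.mem_toFinset.mpr hy))
  -- w ≤ i z
  have hw : (i (S x) - u) ⊔ 0 ≤ i z := by
    refine sup_le ?_ hiz0
    have hSx : i (S x) ≤ i (T x) := imono _ _ (hST x (hA hxA))
    have : i (S x) - u ≤ i (T x) - i y := sub_le_sub hSx hiyu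
    calc i (S x) - u ≤ i (T x) - i y := this
      _ = i (T x - y) := by rw [map_sub]
      _ ≤ i z := imono _ _ hz2
  have hw' : -(i z) ≤ (i (S x) - u) ⊔ 0 := le_trans (neg_nonpos.mpr hiz0) le_sup_right
  have hbdd : BddBelow {r : ℝ | ∃ z' : Y, -(i z') ≤ (i (S x) - u) ⊔ 0 ∧
      (i (S x) - u) ⊔ 0 ≤ i z' ∧ r = ‖z'‖} := by
    refine ⟨0, ?_⟩
    rintro r ⟨z', _, _, rfl⟩
    exact norm_nonneg _
  have : regExtN i ((i (S x) - u) ⊔ 0) ≤ ‖z‖ :=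
    csInf_le hbdd ⟨z, hw', hw, rfl⟩
  linarith
end

section
/- Let X be a Riesz space and let A ⊆ X∼ separate the points of X. Then the topological dual of X equipped with the absolute weak topology generated by A (seminorms p_f(x) = |f|(|x|), f ∈ A) equals the ideal generated by A in the order dual X∼. -/
open Set

section

variable {X : Type*} [AddCommGroup X] [Lattice X]
  [CovariantClass X X (· + ·) (· ≤ ·)] [Module ℝ X] [PosSMulMono ℝ X]

/-- A linear functional on a Riesz space is order bounded (belongs to the order
dual `X∼`). -/
def OrderBddF (f : X →ₗ[ℝ] ℝ) : Prop :=
  ∀ a b : X, ∃ M : ℝ, ∀ z : X, a ≤ z → z ≤ b → |f z| ≤ M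

/-- The absolute weak seminorm `p_f (x) = |f| (|x|) = sup {f h : |h| ≤ |x|}`. -/
noncomputable def pAbs (f : X →ₗ[ℝ] ℝ) (x : X) : ℝ :=
  sSup {r : ℝ | ∃ h : X, |h| ≤ |x| ∧ r = f h}

lemma zero_mem_pAbsSet (f : X →ₗ[ℝ] ℝ) (x : X) :
    (0 : ℝ) ∈ {r : ℝ | ∃ h : X, |h| ≤ |x| ∧ r = f h} :=
  ⟨0, by simpa using abs_nonneg x, by simp⟩

lemma bddAbove_pAbsSet {f : X →ₗ[ℝ] ℝ} (hf : OrderBddF f) (x : X) :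
    BddAbove {r : ℝ | ∃ h : X, |h| ≤ |x| ∧ r = f h} := by
  obtain ⟨M, hM⟩ := hf (-|x|) |x|
  refine ⟨M, fun r ⟨h, hh, hr⟩ => ?_⟩
  rw [abs_le'] at hh
  have h1 : -|x| ≤ h := neg_le.mpr hh.2
  exact hr ▸ (le_abs_self _).trans (hM h h1 hh.1)

lemma pAbs_nonneg {f : X →ₗ[ℝ] ℝ} (hf : OrderBddF f) (x : X) : 0 ≤ pAbs f x :=
  le_csSup (bddAbove_pAbsSet hf x) (zero_mem_pAbsSet f x)

lemma pAbs_mono {f : X →ₗ[ℝ] ℝ} (hf : OrderBddF f) {x y : X} (h : |x| ≤ |y|) :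
    pAbs f x ≤ pAbs f y := by
  refine csSup_le_csSup (bddAbove_pAbsSet hf y) ⟨0, zero_mem_pAbsSet f x⟩ ?_
  rintro r ⟨u, hu, hr⟩
  exact ⟨u, hu.trans h, hr⟩

lemma pAbs_abs (f : X →ₗ[ℝ] ℝ) (x : X) : pAbs f |x| = pAbs f x := by
  unfold pAbs
  rw [abs_abs]

lemma le_pAbs {g : X →ₗ[ℝ] ℝ} (hg : OrderBddF g) (x : X) : g x ≤ pAbs g x :=
  le_csSup (bddAbove_pAbsSet hg x) ⟨x, le_rfl, rfl⟩

lemma abs_apply_le_pAbs {g : X →ₗ[ℝ] ℝ} (hg : OrderBddF g) (x : X) :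
    |g x| ≤ pAbs g x := by
  rw [abs_le]
  constructor
  · have := le_pAbs hg (-x)
    have hset : pAbs g (-x) = pAbs g x := by unfold pAbs; rw [abs_neg]
    rw [hset, map_neg] at this
    linarith
  · exact le_pAbs hg x

/-- Kaplan: if `A ⊆ X∼` separates the points of the Riesz space `X`,
then the topological dual of `(X, |σ|(X, A))` (i.e. the functionals dominated by
finitely many of the seminorms `p_f`, `f ∈ A`) is exactly the ideal generated by `A`
in the order dual `X∼` (i.e. the order bounded functionals `g` with
`|g| ≤ C (|f₁| + ⋯ + |fₙ|)` for some `f₁, …, fₙ ∈ A`). -/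
theorem statement19 (A : Set (X →ₗ[ℝ] ℝ))
    (hA : ∀ f ∈ A, OrderBddF f)
    (hsep : ∀ x : X, x ≠ 0 → ∃ f ∈ A, f x ≠ 0) :
    ∀ g : X →ₗ[ℝ] ℝ,
      ((∃ G : Finset (X →ₗ[ℝ] ℝ), ↑G ⊆ A ∧ ∃ C : ℝ,
          ∀ x : X, |g x| ≤ C * ∑ f ∈ G, pAbs f x) ↔
        (OrderBddF g ∧ ∃ G : Finset (X →ₗ[ℝ] ℝ), ↑G ⊆ A ∧ ∃ C : ℝ,
          ∀ x : X, 0 ≤ x → pAbs g x ≤ C * ∑ f ∈ G, pAbs f x)) := by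
  intro g
  constructor
  · rintro ⟨G, hG, C, hC⟩
    set C' : ℝ := max C 0 with hC'
    have hC'0 : 0 ≤ C' := le_max_right _ _
    have hCC' : C ≤ C' := le_max_left _ _
    have hsum_nonneg : ∀ x : X, 0 ≤ ∑ f ∈ G, pAbs f x := fun x =>
      Finset.sum_nonneg fun f hf => pAbs_nonneg (hA f (hG hf)) x
    have key : ∀ x : X, |g x| ≤ C' * ∑ f ∈ G, pAbs f x := fun x =>
      (hC x).trans (mul_le_mul_of_nonneg_right hCC' (hsum_nonneg x))
    have hgb : OrderBddF g := by
      intro a b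
      refine ⟨C' * ∑ f ∈ G, pAbs f (|a| ⊔ |b|), fun z hz1 hz2 => ?_⟩
      have hzabs : |z| ≤ |(|a| ⊔ |b|)| := by
        rw [abs_of_nonneg (le_trans (abs_nonneg a) le_sup_left)]
        rw [abs_le']
        have h1 : z ≤ |a| ⊔ |b| := hz2.trans ((le_abs_self b).trans le_sup_right)
        have h2 : -z ≤ |a| ⊔ |b| := by
          have : -z ≤ -a := neg_le_neg_iff.mpr hz1
          exact this.trans ((neg_le_abs a).trans le_sup_left)
        exact ⟨h1, h2⟩
      refine (key z).trans (mul_le_mul_of_nonneg_left ?_ hC'0)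
      exact Finset.sum_le_sum fun f hf => pAbs_mono (hA f (hG hf)) hzabs
    refine ⟨hgb, G, hG, C', fun x hx => ?_⟩
    refine csSup_le ⟨0, zero_mem_pAbsSet g x⟩ ?_
    rintro r ⟨h, hh, rfl⟩
    refine (le_abs_self _).trans ((key h).trans (mul_le_mul_of_nonneg_left ?_ hC'0))
    exact Finset.sum_le_sum fun f hf => pAbs_mono (hA f (hG hf)) hh
  · rintro ⟨hgb, G, hG, C, hC⟩
    refine ⟨G, hG, max C 0, fun x => ?_⟩
    have hsum_nonneg : 0 ≤ ∑ f ∈ G, pAbs f x :=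
      Finset.sum_nonneg fun f hf => pAbs_nonneg (hA f (hG hf)) x
    have h1 : |g x| ≤ pAbs g x := abs_apply_le_pAbs hgb x
    have h2 : pAbs g x ≤ C * ∑ f ∈ G, pAbs f x := by
      have := hC |x| (abs_nonneg x)
      rw [pAbs_abs] at this
      have heq : ∀ f ∈ G, pAbs f |x| = pAbs f x := fun f _ => pAbs_abs f x
      rwa [Finset.sum_congr rfl heq] at this
    calc |g x| ≤ C * ∑ f ∈ G, pAbs f x := h1.trans h2
      _ ≤ max C 0 * ∑ f ∈ G, pAbs f x :=
          mul_le_mul_of_nonneg_right (le_max_left _ _) hsum_nonneg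

end
end
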